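/- arXiv:1001.0513 — 9 statements merged into one kernel-verified Lean document; each statement's English description precedes it below -/
import Mathlib

section
/- Let 0 < H1 < H2 < 1, let d ≥ 1 be an integer and N ≥ 0 an integer. Then the double integral ∫₀¹∫₀¹ (t² + s²)^N / (t^{2H1} + s^{2H2})^{N + d/2} dt ds is finite if and only if 2·H2·(N + d/2) < 1 + 2N + H2/H1. -/
open MeasureTheory Set Real
open scoped ENNReal

lemma point_up1 (H1 H2 p : ℝ) (hH1 : 0 < H1) (hH12 : H1 < H2) (hp : 0 < p) (N : ℕ)
    (t s : ℝ) (ht0 : 0 < t) (ht1 : t ≤ 1) (hs0 : 0 < s) (hsu : s ≤ t ^ (H1/H2)) :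
    (t ^ 2 + s ^ 2) ^ N / (t ^ (2 * H1) + s ^ (2 * H2)) ^ p ≤
      2 ^ N * t ^ ((H1/H2) * (2*(N:ℝ)) - 2*H1*p) := by
  have hH2 : 0 < H2 := hH1.trans hH12
  set r := H1/H2 with hrdef
  have hr0 : 0 < r := div_pos hH1 hH2
  have hr1 : r ≤ 1 := le_of_lt ((div_lt_one hH2).2 hH12)
  set u := t ^ r with hu
  have hu0 : 0 < u := Real.rpow_pos_of_pos ht0 r
  have htu : t ≤ u := by
    calc t = t ^ (1:ℝ) := (Real.rpow_one t).symm
    _ ≤ t ^ r := Real.rpow_le_rpow_of_exponent_ge ht0 ht1 hr1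
  have hnum : (t^2+s^2)^N ≤ 2^N * u^(2*N) := by
    calc (t^2+s^2)^N ≤ (2*u^2)^N := pow_le_pow_left₀ (by positivity) (by nlinarith) N
    _ = 2^N * u^(2*N) := by rw [mul_pow, ← pow_mul]
  have hden : t ^ (2*H1*p) ≤ (t ^ (2*H1) + s ^ (2*H2)) ^ p := by
    rw [Real.rpow_mul ht0.le]
    refine Real.rpow_le_rpow (Real.rpow_nonneg ht0.le _) ?_ hp.le
    have : 0 ≤ s ^ (2*H2) := Real.rpow_nonneg hs0.le _
    linarith
  have hdenpos : 0 < t ^ (2*H1*p) := Real.rpow_pos_of_pos ht0 _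
  have hcast : ((2*N : ℕ):ℝ) = 2*(N:ℝ) := by push_cast; ring
  have hupow : u ^ (2*N) = t ^ (r * (2*(N:ℝ))) := by
    rw [← Real.rpow_natCast u (2*N), hcast, hu]
    exact (Real.rpow_mul ht0.le _ _).symm
  calc (t^2+s^2)^N / (t ^ (2*H1) + s ^ (2*H2))^p
      ≤ (2^N * u^(2*N)) / t^(2*H1*p) := div_le_div₀ (by positivity) hnum hdenpos hden
  _ = 2 ^ N * t ^ (r * (2*(N:ℝ)) - 2*H1*p) := by
      rw [Real.rpow_sub ht0, hupow]; ring

lemma point_up2 (H1 H2 p : ℝ) (hH1 : 0 < H1) (hH12 : H1 < H2) (hp : 0 < p) (N : ℕ)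
    (t s : ℝ) (ht0 : 0 < t) (ht1 : t ≤ 1) (hsu : t ^ (H1/H2) < s) (hs1 : s ≤ 1) :
    (t ^ 2 + s ^ 2) ^ N / (t ^ (2 * H1) + s ^ (2 * H2)) ^ p ≤
      2 ^ N * (t ^ (H1/H2)) ^ (min ((H2/H1 + 2*(N:ℝ) + 1 - 2*H2*p)/2 - H2/H1) 0) *
        s ^ ((H2/H1 + 2*(N:ℝ) + 1 - 2*H2*p)/2 - 1) := by
  have hH2 : 0 < H2 := hH1.trans hH12
  set ε := (H2/H1 + 2*(N:ℝ) + 1 - 2*H2*p)/2 with hε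
  set r := H1/H2 with hrdef
  have hr0 : 0 < r := div_pos hH1 hH2
  have hr1 : r ≤ 1 := le_of_lt ((div_lt_one hH2).2 hH12)
  set u := t ^ r with hu
  have hu0 : 0 < u := Real.rpow_pos_of_pos ht0 r
  have hs0 : 0 < s := hu0.trans hsu
  have htu : t ≤ u := by
    calc t = t ^ (1:ℝ) := (Real.rpow_one t).symm
    _ ≤ t ^ r := Real.rpow_le_rpow_of_exponent_ge ht0 ht1 hr1
  have hus : u ≤ s := hsu.le
  have hnum : (t^2+s^2)^N ≤ 2^N * s^(2*N) := by
    calc (t^2+s^2)^N ≤ (2*s^2)^N := pow_le_pow_left₀ (by positivity) (by nlinarith) N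
    _ = 2^N * s^(2*N) := by rw [mul_pow, ← pow_mul]
  have hden : s ^ (2*H2*p) ≤ (t ^ (2*H1) + s ^ (2*H2)) ^ p := by
    rw [Real.rpow_mul hs0.le]
    refine Real.rpow_le_rpow (Real.rpow_nonneg hs0.le _) ?_ hp.le
    have : 0 ≤ t ^ (2*H1) := Real.rpow_nonneg ht0.le _
    linarith
  have hdenpos : 0 < s ^ (2*H2*p) := Real.rpow_pos_of_pos hs0 _
  have hcast : ((2*N : ℕ):ℝ) = 2*(N:ℝ) := by push_cast; ring
  have hspow : (s:ℝ) ^ (2*N) = s ^ (2*(N:ℝ)) := by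
    rw [← Real.rpow_natCast s (2*N), hcast]
  have step1 : (t^2+s^2)^N / (t ^ (2*H1) + s ^ (2*H2))^p
      ≤ 2^N * s ^ (2*(N:ℝ) - 2*H2*p) := by
    calc (t^2+s^2)^N / (t ^ (2*H1) + s ^ (2*H2))^p
        ≤ (2^N * s^(2*N)) / s^(2*H2*p) := div_le_div₀ (by positivity) hnum hdenpos hden
    _ = 2^N * s ^ (2*(N:ℝ) - 2*H2*p) := by
        rw [Real.rpow_sub hs0, hspow]; ring
  have hsplit : s ^ (2*(N:ℝ) - 2*H2*p) = s ^ (ε - 1) * s ^ (ε - H2/H1) := by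
    rw [← Real.rpow_add hs0]
    congr 1
    rw [hε]; ring
  have hfac : s ^ (ε - H2/H1) ≤ u ^ (min (ε - H2/H1) 0) := by
    rcases le_or_gt (ε - H2/H1) 0 with h|h
    · rw [min_eq_left h]
      exact Real.rpow_le_rpow_of_nonpos hu0 hus h
    · rw [min_eq_right h.le, Real.rpow_zero]
      exact Real.rpow_le_one hs0.le hs1 h.le
  calc (t^2+s^2)^N / (t ^ (2*H1) + s ^ (2*H2))^p
      ≤ 2^N * s ^ (2*(N:ℝ) - 2*H2*p) := step1
  _ = 2^N * (s ^ (ε - H2/H1) * s ^ (ε - 1)) := by rw [hsplit]; ring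
  _ ≤ 2^N * (u ^ (min (ε - H2/H1) 0) * s ^ (ε - 1)) := by
      refine mul_le_mul_of_nonneg_left (mul_le_mul_of_nonneg_right hfac ?_) (by positivity)
      positivity
  _ = 2 ^ N * u ^ (min (ε - H2/H1) 0) * s ^ (ε - 1) := by ring

lemma point_low (H1 H2 p : ℝ) (hH1 : 0 < H1) (hH12 : H1 < H2) (hp : 0 < p) (N : ℕ)
    (hc : 2*(N:ℝ) - 2*H2*p ≤ 0)
    (t s : ℝ) (ht0 : 0 < t) (hsu : t ^ (H1/H2) < s) (hs2 : s ≤ 2 * t ^ (H1/H2)) :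
    2 ^ (-p) * (2 * t ^ (H1/H2)) ^ (2*(N:ℝ) - 2*H2*p) ≤
      (t ^ 2 + s ^ 2) ^ N / (t ^ (2 * H1) + s ^ (2 * H2)) ^ p := by
  have hH2 : 0 < H2 := hH1.trans hH12
  set c := 2*(N:ℝ) - 2*H2*p with hcdef
  set r := H1/H2 with hrdef
  set u := t ^ r with hu
  have hu0 : 0 < u := Real.rpow_pos_of_pos ht0 r
  have hs0 : 0 < s := hu0.trans hsu
  have hub : t ^ (2*H1) = u ^ (2*H2) := by
    rw [hu, ← Real.rpow_mul ht0.le]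
    congr 1
    rw [hrdef]; field_simp
  have hus : u ^ (2*H2) ≤ s ^ (2*H2) :=
    Real.rpow_le_rpow hu0.le hsu.le (by positivity)
  have hcast : ((2*N : ℕ):ℝ) = 2*(N:ℝ) := by push_cast; ring
  have hnum : s^(2*N) ≤ (t^2+s^2)^N := by
    calc s^(2*N) = (s^2)^N := by rw [← pow_mul]
    _ ≤ (t^2+s^2)^N := pow_le_pow_left₀ (by positivity) (by nlinarith) N
  have hden : (t ^ (2*H1) + s ^ (2*H2)) ^ p ≤ 2^p * s^(2*H2*p) := by
    have hsum : t ^ (2*H1) + s ^ (2*H2) ≤ 2 * s ^ (2*H2) := by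
      rw [hub]; linarith
    calc (t ^ (2*H1) + s ^ (2*H2)) ^ p ≤ (2 * s ^ (2*H2)) ^ p := by
          refine Real.rpow_le_rpow ?_ hsum hp.le
          positivity
    _ = 2^p * s^(2*H2*p) := by
        rw [Real.mul_rpow (by norm_num) (Real.rpow_nonneg hs0.le _), ← Real.rpow_mul hs0.le]
  have hdenpos : 0 < (t ^ (2*H1) + s ^ (2*H2)) ^ p := by
    refine Real.rpow_pos_of_pos ?_ p
    have := Real.rpow_pos_of_pos ht0 (2*H1)
    have := Real.rpow_pos_of_pos hs0 (2*H2)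
    linarith
  have h1 : s^(2*N) / (2^p * s^(2*H2*p)) ≤
      (t^2+s^2)^N / (t ^ (2*H1) + s ^ (2*H2))^p :=
    div_le_div₀ (by positivity) hnum hdenpos hden
  have h3 : (2*u) ^ c ≤ s ^ c := Real.rpow_le_rpow_of_nonpos hs0 hs2 hc
  have h2 : (2:ℝ)^(-p) * (2*u)^c ≤ s^(2*N) / (2^p * s^(2*H2*p)) := by
    calc (2:ℝ)^(-p) * (2*u)^c ≤ 2^(-p) * s^c := by
          refine mul_le_mul_of_nonneg_left h3 ?_
          positivity
    _ = s^(2*N) / (2^p * s^(2*H2*p)) := by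
        rw [Real.rpow_neg (by norm_num : (0:ℝ) ≤ 2), hcdef, Real.rpow_sub hs0,
          ← Real.rpow_natCast s (2*N), hcast]
        ring
  exact h2.trans h1

lemma aux_measr (e : ℝ) : Measurable (fun x : ℝ => x ^ e) := by measurability

lemma aux_fin {e : ℝ} (he : -1 < e) :
    ∫⁻ x in Ioc (0:ℝ) 1, ENNReal.ofReal (x ^ e) < ⊤ := by
  have h1 : IntegrableOn (fun x : ℝ => x ^ e) (Ioo (0:ℝ) 1) :=
    (intervalIntegral.integrableOn_Ioo_rpow_iff zero_lt_one).2 he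
  have h2 : IntegrableOn (fun x : ℝ => x ^ e) (Ioc (0:ℝ) 1) := by
    rwa [IntegrableOn, Measure.restrict_congr_set Ioo_ae_eq_Ioc] at h1
  exact h2.lintegral_lt_top

lemma aux_inf {e : ℝ} (he : e ≤ -1) {t₀ : ℝ} (ht₀ : 0 < t₀) :
    ∫⁻ x in Ioc (0:ℝ) t₀, ENNReal.ofReal (x ^ e) = ⊤ := by
  by_contra h
  have hfin : ∫⁻ x in Ioo (0:ℝ) t₀, ENNReal.ofReal (x ^ e) < ⊤ :=
    lt_of_le_of_lt (lintegral_mono_set Ioo_subset_Ioc_self) (lt_top_iff_ne_top.2 h)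
  have hint : IntegrableOn (fun x : ℝ => x ^ e) (Ioo (0:ℝ) t₀) := by
    constructor
    · exact (aux_measr e).aestronglyMeasurable
    · rw [hasFiniteIntegral_iff_ofReal]
      · exact hfin
      · filter_upwards [ae_restrict_mem measurableSet_Ioo] with x hx
        exact Real.rpow_nonneg hx.1.le e
  have := (intervalIntegral.integrableOn_Ioo_rpow_iff ht₀).1 hint
  linarith

lemma lint_ofReal_const_mul {k : ℝ} (hk : 0 ≤ k) (g : ℝ → ℝ) (A : Set ℝ) :
    ∫⁻ x in A, ENNReal.ofReal (k * g x) =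
      ENNReal.ofReal k * ∫⁻ x in A, ENNReal.ofReal (g x) := by
  simp_rw [ENNReal.ofReal_mul hk]
  exact lintegral_const_mul' _ _ ENNReal.ofReal_ne_top

/-- Lemma: for `0 < H1 < H2 < 1`, integers `d ≥ 1`, `N ≥ 0`, the double integral
`∫₀¹∫₀¹ (t² + s²)^N / (t^{2H1} + s^{2H2})^{N + d/2} dt ds` is finite if and only if
`2 H2 (N + d/2) < 1 + 2N + H2/H1`. -/
theorem integral_finite_iff (H1 H2 : ℝ) (hH1 : 0 < H1) (hH12 : H1 < H2) (hH2 : H2 < 1)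
    (d : ℕ) (hd : 1 ≤ d) (N : ℕ) :
    (∫⁻ t in Ioc (0:ℝ) 1, ∫⁻ s in Ioc (0:ℝ) 1,
        ENNReal.ofReal ((t ^ 2 + s ^ 2) ^ N /
          (t ^ (2 * H1) + s ^ (2 * H2)) ^ ((N : ℝ) + (d : ℝ) / 2))) < ⊤ ↔
      2 * H2 * ((N : ℝ) + (d : ℝ) / 2) < 1 + 2 * (N : ℝ) + H2 / H1 := by
  have hH2' : 0 < H2 := hH1.trans hH12
  set p : ℝ := (N:ℝ) + (d:ℝ)/2 with hpdef
  have hd1 : (1:ℝ) ≤ (d:ℝ) := by exact_mod_cast hd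
  have hN0 : (0:ℝ) ≤ (N:ℝ) := Nat.cast_nonneg N
  have hp : 0 < p := by rw [hpdef]; linarith
  set r : ℝ := H1 / H2 with hrdef
  have hr0 : 0 < r := div_pos hH1 hH2'
  have hr1 : r < 1 := (div_lt_one hH2').2 hH12
  have hrH : r * (H2/H1) = 1 := by rw [hrdef]; field_simp
  have hHH : 0 < H2/H1 := div_pos hH2' hH1
  constructor
  · -- finiteness → condition (contrapositive)
    intro hI
    by_contra hCn
    push_neg at hCn   -- 1 + 2N + H2/H1 ≤ 2*H2*p
    set c : ℝ := 2*(N:ℝ) - 2*H2*p with hcdef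
    have hc1 : c + 1 ≤ -(H2/H1) := by rw [hcdef]; linarith
    have hc0 : c ≤ 0 := by linarith
    set e : ℝ := r * (c+1) with hedef
    have he : e ≤ -1 := by
      have h := mul_le_mul_of_nonneg_left hc1 hr0.le
      rw [mul_neg, hrH] at h
      rw [hedef]; linarith
    set t₀ : ℝ := (2:ℝ) ^ (-(1/r)) with ht₀def
    have ht₀0 : 0 < t₀ := Real.rpow_pos_of_pos two_pos _
    have ht₀1 : t₀ ≤ 1 := by
      refine Real.rpow_le_one_of_one_le_of_nonpos one_le_two ?_
      have : 0 < 1/r := by positivity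
      linarith
    have hlow : ∀ t ∈ Ioc (0:ℝ) t₀,
        ENNReal.ofReal ((2:ℝ)^(c-p) * t ^ e) ≤
          ∫⁻ s in Ioc (0:ℝ) 1, ENNReal.ofReal ((t ^ 2 + s ^ 2) ^ N /
            (t ^ (2 * H1) + s ^ (2 * H2)) ^ p) := by
      intro t ht
      have ht0 : 0 < t := ht.1
      set u := t ^ r with hu
      have hu0 : 0 < u := Real.rpow_pos_of_pos ht0 r
      have h2u1 : 2*u ≤ 1 := by
        have h1 : u ≤ t₀ ^ r := Real.rpow_le_rpow ht0.le ht.2 hr0.le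
        have h2 : t₀ ^ r = 1/2 := by
          rw [ht₀def, ← Real.rpow_mul (by norm_num : (0:ℝ) ≤ 2)]
          rw [show -(1/r) * r = -1 by field_simp]
          rw [Real.rpow_neg_one]; norm_num
        rw [h2] at h1; linarith
      have hval : (2:ℝ)^(-p) * ((2*u)^c) * u = 2^(c-p) * t^e := by
        rw [Real.mul_rpow (by norm_num : (0:ℝ) ≤ 2) hu0.le]
        rw [show (2:ℝ)^(-p) * ((2:ℝ)^c * u^c) * u = ((2:ℝ)^(-p) * 2^c) * (u^c * u) by ring]
        rw [← Real.rpow_add two_pos, show -p + c = c - p by ring]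
        rw [← Real.rpow_add_one hu0.ne' c]
        congr 1
        rw [hu, ← Real.rpow_mul ht0.le, hedef]
      calc ENNReal.ofReal ((2:ℝ)^(c-p) * t ^ e)
          = ENNReal.ofReal ((2:ℝ)^(-p) * ((2*u)^c)) * volume (Ioc u (2*u)) := by
            rw [Real.volume_Ioc, show 2*u - u = u by ring,
              ← ENNReal.ofReal_mul (by positivity), hval]
        _ = ∫⁻ _ in Ioc u (2*u), ENNReal.ofReal ((2:ℝ)^(-p) * ((2*u)^c)) :=
            (setLIntegral_const _ _).symm
        _ ≤ ∫⁻ s in Ioc u (2*u), ENNReal.ofReal ((t ^ 2 + s ^ 2) ^ N /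
              (t ^ (2 * H1) + s ^ (2 * H2)) ^ p) := by
            refine setLIntegral_mono' measurableSet_Ioc (fun s hs => ?_)
            exact ENNReal.ofReal_le_ofReal
              (point_low H1 H2 p hH1 hH12 hp N hc0 t s ht0 hs.1 hs.2)
        _ ≤ ∫⁻ s in Ioc (0:ℝ) 1, ENNReal.ofReal ((t ^ 2 + s ^ 2) ^ N /
              (t ^ (2 * H1) + s ^ (2 * H2)) ^ p) :=
            lintegral_mono_set (Ioc_subset_Ioc hu0.le h2u1)
    have htop : (⊤:ℝ≥0∞) ≤ ∫⁻ t in Ioc (0:ℝ) 1, ∫⁻ s in Ioc (0:ℝ) 1,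
        ENNReal.ofReal ((t ^ 2 + s ^ 2) ^ N /
          (t ^ (2 * H1) + s ^ (2 * H2)) ^ p) := by
      calc (⊤:ℝ≥0∞) = ENNReal.ofReal ((2:ℝ)^(c-p)) *
            ∫⁻ t in Ioc (0:ℝ) t₀, ENNReal.ofReal (t ^ e) := by
            rw [aux_inf he ht₀0, ENNReal.mul_top]
            exact (ENNReal.ofReal_pos.2 (by positivity)).ne'
        _ = ∫⁻ t in Ioc (0:ℝ) t₀, ENNReal.ofReal ((2:ℝ)^(c-p) * t ^ e) :=
            (lint_ofReal_const_mul (by positivity) _ _).symm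
        _ ≤ ∫⁻ t in Ioc (0:ℝ) t₀, ∫⁻ s in Ioc (0:ℝ) 1,
              ENNReal.ofReal ((t ^ 2 + s ^ 2) ^ N /
                (t ^ (2 * H1) + s ^ (2 * H2)) ^ p) :=
            setLIntegral_mono' measurableSet_Ioc hlow
        _ ≤ _ := lintegral_mono_set (Ioc_subset_Ioc le_rfl ht₀1)
    exact absurd (top_le_iff.1 htop) hI.ne
  · -- condition → finiteness
    intro hC
    set ε : ℝ := (H2/H1 + 2*(N:ℝ) + 1 - 2*H2*p)/2 with hεdef
    have hε : 0 < ε := by rw [hεdef]; linarith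
    set m : ℝ := min (ε - H2/H1) 0 with hmdef
    have hm1 : -1 < r*m := by
      rcases le_or_gt (ε - H2/H1) 0 with h|h
      · rw [hmdef, min_eq_left h]
        have h2 : r*(ε - H2/H1) = r*ε - 1 := by rw [mul_sub, hrH]
        nlinarith [mul_pos hr0 hε]
      · rw [hmdef, min_eq_right h.le, mul_zero]; norm_num
    set e1 : ℝ := r*(2*(N:ℝ)) - 2*H1*p + r with he1def
    have he1 : -1 < e1 := by
      have h2 : r * (2*H2*p) = 2*H1*p := by rw [hrdef]; field_simp
      have h3 := mul_lt_mul_of_pos_left hC hr0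
      rw [h2] at h3
      have h4 : r * (1 + 2*(N:ℝ) + H2/H1) = r + r*(2*(N:ℝ)) + 1 := by
        linear_combination hrH
      rw [h4] at h3
      rw [he1def]; linarith
    set K : ℝ≥0∞ := ∫⁻ s in Ioc (0:ℝ) 1, ENNReal.ofReal (s ^ (ε - 1)) with hKdef
    have hK : K < ⊤ := aux_fin (by linarith)
    have key : ∀ t ∈ Ioc (0:ℝ) 1,
        (∫⁻ s in Ioc (0:ℝ) 1, ENNReal.ofReal ((t ^ 2 + s ^ 2) ^ N /
          (t ^ (2 * H1) + s ^ (2 * H2)) ^ p)) ≤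
        ENNReal.ofReal ((2:ℝ)^N * t ^ e1) +
          ENNReal.ofReal ((2:ℝ)^N * t ^ (r*m)) * K := by
      intro t ht
      have ht0 : 0 < t := ht.1
      set u := t ^ r with hu
      have hu0 : 0 < u := Real.rpow_pos_of_pos ht0 r
      have hu1 : u ≤ 1 := Real.rpow_le_one ht0.le ht.2 hr0.le
      rw [← Ioc_union_Ioc_eq_Ioc hu0.le hu1,
        lintegral_union measurableSet_Ioc (Ioc_disjoint_Ioc_of_le le_rfl)]
      refine add_le_add ?_ ?_
      · calc ∫⁻ s in Ioc (0:ℝ) u, ENNReal.ofReal ((t ^ 2 + s ^ 2) ^ N /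
              (t ^ (2 * H1) + s ^ (2 * H2)) ^ p)
            ≤ ∫⁻ _ in Ioc (0:ℝ) u,
                ENNReal.ofReal ((2:ℝ)^N * t ^ (r * (2*(N:ℝ)) - 2*H1*p)) := by
              refine setLIntegral_mono' measurableSet_Ioc (fun s hs => ?_)
              exact ENNReal.ofReal_le_ofReal
                (point_up1 H1 H2 p hH1 hH12 hp N t s ht0 ht.2 hs.1 hs.2)
          _ = ENNReal.ofReal ((2:ℝ)^N * t ^ (r * (2*(N:ℝ)) - 2*H1*p)) *
                ENNReal.ofReal u := by
              rw [setLIntegral_const, Real.volume_Ioc, sub_zero]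
          _ = ENNReal.ofReal ((2:ℝ)^N * t ^ e1) := by
              rw [← ENNReal.ofReal_mul (by positivity)]
              congr 1
              rw [hu, mul_assoc, ← Real.rpow_add ht0, he1def]
      · calc ∫⁻ s in Ioc u 1, ENNReal.ofReal ((t ^ 2 + s ^ 2) ^ N /
              (t ^ (2 * H1) + s ^ (2 * H2)) ^ p)
            ≤ ∫⁻ s in Ioc u 1,
                ENNReal.ofReal ((2:ℝ)^N * u ^ m * s ^ (ε - 1)) := by
              refine setLIntegral_mono' measurableSet_Ioc (fun s hs => ?_)
              refine ENNReal.ofReal_le_ofReal ?_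
              have h := point_up2 H1 H2 p hH1 hH12 hp N t s ht0 ht.2 hs.1 hs.2
              rw [← hεdef, ← hu, ← hmdef] at h
              exact h
          _ = ENNReal.ofReal ((2:ℝ)^N * u ^ m) *
                ∫⁻ s in Ioc u 1, ENNReal.ofReal (s ^ (ε - 1)) := by
              exact lint_ofReal_const_mul (by positivity) (fun s => s ^ (ε - 1)) _
          _ ≤ ENNReal.ofReal ((2:ℝ)^N * t ^ (r*m)) * K := by
              refine mul_le_mul' ?_ (lintegral_mono_set (Ioc_subset_Ioc_left hu0.le))
              refine ENNReal.ofReal_le_ofReal ?_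
              rw [hu, ← Real.rpow_mul ht0.le]
    have hfin1 : ∫⁻ t in Ioc (0:ℝ) 1, ENNReal.ofReal ((2:ℝ)^N * t ^ e1) < ⊤ := by
      rw [lint_ofReal_const_mul (by positivity) _ _]
      exact ENNReal.mul_lt_top ENNReal.ofReal_lt_top (aux_fin he1)
    have hfin2 : ∫⁻ t in Ioc (0:ℝ) 1, ENNReal.ofReal ((2:ℝ)^N * t ^ (r*m)) < ⊤ := by
      rw [lint_ofReal_const_mul (by positivity) _ _]
      exact ENNReal.mul_lt_top ENNReal.ofReal_lt_top (aux_fin hm1)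
    calc ∫⁻ t in Ioc (0:ℝ) 1, ∫⁻ s in Ioc (0:ℝ) 1,
          ENNReal.ofReal ((t ^ 2 + s ^ 2) ^ N /
            (t ^ (2 * H1) + s ^ (2 * H2)) ^ p)
        ≤ ∫⁻ t in Ioc (0:ℝ) 1, (ENNReal.ofReal ((2:ℝ)^N * t ^ e1) +
            ENNReal.ofReal ((2:ℝ)^N * t ^ (r*m)) * K) :=
          setLIntegral_mono' measurableSet_Ioc key
      _ = (∫⁻ t in Ioc (0:ℝ) 1, ENNReal.ofReal ((2:ℝ)^N * t ^ e1)) +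
            ∫⁻ t in Ioc (0:ℝ) 1, ENNReal.ofReal ((2:ℝ)^N * t ^ (r*m)) * K :=
          lintegral_add_left (((aux_measr e1).const_mul _).ennreal_ofReal) _
      _ = (∫⁻ t in Ioc (0:ℝ) 1, ENNReal.ofReal ((2:ℝ)^N * t ^ e1)) +
            (∫⁻ t in Ioc (0:ℝ) 1, ENNReal.ofReal ((2:ℝ)^N * t ^ (r*m))) * K := by
          rw [lintegral_mul_const' K _ hK.ne]
      _ < ⊤ := ENNReal.add_lt_top.2 ⟨hfin1, ENNReal.mul_lt_top hfin2 hK⟩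
end

section
/- Let d ≥ 1 and N ≥ 0 be integers and let H1 = (H_{1,1},...,H_{1,d}) and H2 = (H_{2,1},...,H_{2,d}) be vectors in (0,1)^d. Write H̄1 = max_{j} H_{1,j} and H̄2 = max_j H_{2,j}, and assume H̄1 < H̄2. If 2·H̄2·(N + d/2) < 1 + 2N + H̄2/H̄1, then the integral ∫₀¹∫₀¹ [∏_{j=1}^d (t^{2H_{1,j}} + s^{2H_{2,j}})^{-1/2}] · ((t² + s²)/(t^{2H̄1} + s^{2H̄2}))^N dt ds is finite. -/
set_option maxHeartbeats 1000000


open MeasureTheory Set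

/-- geometric mean bound: `(x+y)^(-α) ≤ x^(-(θα)) * y^(-((1-θ)α))`. -/
lemma geom_aux {x y θ α : ℝ} (hx : 0 < x) (hy : 0 < y) (hθ0 : 0 ≤ θ) (hθ1 : θ ≤ 1)
    (hα : 0 ≤ α) : (x + y) ^ (-α) ≤ x ^ (-(θ * α)) * y ^ (-((1 - θ) * α)) := by
  have hgm : x ^ θ * y ^ (1 - θ) ≤ x + y := by
    have h := Real.geom_mean_le_arith_mean2_weighted hθ0 (by linarith) hx.le hy.le
      (by ring : θ + (1 - θ) = 1)
    nlinarith [mul_nonneg hθ0 hx.le, mul_nonneg (by linarith : (0:ℝ) ≤ 1 - θ) hy.le,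
      mul_nonneg hθ0 hy.le, mul_nonneg (by linarith : (0:ℝ) ≤ 1 - θ) hx.le]
  have hpos : 0 < x ^ θ * y ^ (1 - θ) := by positivity
  have h1 : (x + y) ^ (-α) ≤ (x ^ θ * y ^ (1 - θ)) ^ (-α) :=
    Real.rpow_le_rpow_of_nonpos hpos hgm (neg_nonpos.2 hα)
  calc (x + y) ^ (-α) ≤ (x ^ θ * y ^ (1 - θ)) ^ (-α) := h1
    _ = x ^ (-(θ * α)) * y ^ (-((1 - θ) * α)) := by
        rw [Real.mul_rpow (by positivity) (by positivity),
          ← Real.rpow_mul hx.le, ← Real.rpow_mul hy.le]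
        ring_nf

/-- `∫₀¹ x^(-r) dx < ∞` for `r < 1`. -/
lemma Ifin {r : ℝ} (hr : r < 1) :
    ∫⁻ x in Ioc (0:ℝ) 1, ENNReal.ofReal (x ^ (-r)) < ⊤ := by
  have h : IntervalIntegrable (fun x : ℝ => x ^ (-r)) volume 0 1 :=
    intervalIntegral.intervalIntegrable_rpow' (by linarith)
  have h2 : IntegrableOn (fun x : ℝ => x ^ (-r)) (Ioc 0 1) volume := h.1
  have h3 := (hasFiniteIntegral_iff_ofReal ?_).mp h2.2
  · exact h3
  · filter_upwards [ae_restrict_mem measurableSet_Ioc] with x hx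
    exact Real.rpow_nonneg hx.1.le _

/-- factorized finiteness. -/
lemma prod_fin {p q : ℝ} (hp : p < 1) (hq : q < 1) {C : ℝ} (hC : 0 ≤ C) :
    ∫⁻ t in Ioc (0:ℝ) 1, ∫⁻ s in Ioc (0:ℝ) 1,
      ENNReal.ofReal (C * (t ^ (-p) * s ^ (-q))) < ⊤ := by
  have key : ∀ t ∈ Ioc (0:ℝ) 1,
      (∫⁻ s in Ioc (0:ℝ) 1, ENNReal.ofReal (C * (t ^ (-p) * s ^ (-q))))
        = (ENNReal.ofReal C * ENNReal.ofReal (t ^ (-p)))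
            * ∫⁻ s in Ioc (0:ℝ) 1, ENNReal.ofReal (s ^ (-q)) := by
    intro t ht
    rw [← lintegral_const_mul' _ _ (by finiteness)]
    refine setLIntegral_congr_fun measurableSet_Ioc (fun s hs => ?_)
    rw [ENNReal.ofReal_mul hC, ENNReal.ofReal_mul (Real.rpow_nonneg ht.1.le _), mul_assoc]
  rw [setLIntegral_congr_fun measurableSet_Ioc key,
    lintegral_mul_const' _ _ (Ifin hq).ne,
    lintegral_const_mul' _ _ (by finiteness)]
  exact ENNReal.mul_lt_top (ENNReal.mul_lt_top ENNReal.ofReal_lt_top (Ifin hp)) (Ifin hq)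

/-- If `2 H̄2 (N + d/2) < 1 + 2N + H̄2/H̄1` (with `H̄1 < H̄2`), then
`∫₀¹∫₀¹ ∏ⱼ (t^{2H_{1,j}} + s^{2H_{2,j}})^{-1/2} ((t²+s²)/(t^{2H̄1}+s^{2H̄2}))^N dt ds < ∞`. -/
theorem integral_prod_finite (d : ℕ) (hd : 1 ≤ d) (N : ℕ)
    (H1 H2 : Fin d → ℝ)
    (h1 : ∀ j, H1 j ∈ Ioo (0:ℝ) 1) (h2 : ∀ j, H2 j ∈ Ioo (0:ℝ) 1)
    (HB1 HB2 : ℝ)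
    (hB1 : IsGreatest (Set.range H1) HB1) (hB2 : IsGreatest (Set.range H2) HB2)
    (hlt : HB1 < HB2)
    (hcond : 2 * HB2 * ((N : ℝ) + (d : ℝ) / 2) < 1 + 2 * (N : ℝ) + HB2 / HB1) :
    (∫⁻ t in Ioc (0:ℝ) 1, ∫⁻ s in Ioc (0:ℝ) 1,
        ENNReal.ofReal ((∏ j, (t ^ (2 * H1 j) + s ^ (2 * H2 j)) ^ (-(1:ℝ)/2)) *
          ((t ^ 2 + s ^ 2) / (t ^ (2 * HB1) + s ^ (2 * HB2))) ^ N)) < ⊤ := by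
  obtain ⟨j1, hj1⟩ := hB1.1
  obtain ⟨j2, hj2⟩ := hB2.1
  have ha : 0 < HB1 := hj1 ▸ (h1 j1).1
  have hb : 0 < HB2 := hj2 ▸ (h2 j2).1
  set α : ℝ := (N : ℝ) + (d : ℝ) / 2 with hα_def
  have hd1 : (1:ℝ) ≤ (d:ℝ) := by exact_mod_cast hd
  have hN0 : (0:ℝ) ≤ (N:ℝ) := Nat.cast_nonneg N
  have hα_pos : 0 < α := by rw [hα_def]; linarith
  have hA : 0 < 2 * HB1 * α := by positivity
  have hB : 0 < 2 * HB2 * α := by positivity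
  -- main numeric condition multiplied out
  have hgap : 0 < HB1 + 2 * (N:ℝ) * HB1 + HB2 - 2 * HB1 * HB2 * α := by
    have h := mul_lt_mul_of_pos_right hcond ha
    rw [add_mul, add_mul, div_mul_cancel₀ _ ha.ne'] at h
    nlinarith [h]
  -- existence of θ
  have hL1U1 : 1 - 1 / (2 * HB2 * α) < (1 + 2 * (N:ℝ)) / (2 * HB1 * α) := by
    rw [show (1:ℝ) - 1 / (2 * HB2 * α) = (2 * HB2 * α - 1) / (2 * HB2 * α) by
      field_simp, div_lt_div_iff₀ hB hA]
    nlinarith [mul_pos hα_pos hgap,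
      mul_nonneg (mul_nonneg hN0 hα_pos.le) (sub_nonneg.2 hlt.le)]
  have hL2U2 : 1 - (1 + 2 * (N:ℝ)) / (2 * HB2 * α) < 1 / (2 * HB1 * α) := by
    rw [show (1:ℝ) - (1 + 2 * (N:ℝ)) / (2 * HB2 * α)
        = (2 * HB2 * α - (1 + 2 * N)) / (2 * HB2 * α) by field_simp, div_lt_div_iff₀ hB hA]
    nlinarith [mul_pos hα_pos hgap]
  set θ : ℝ := (max 0 (1 - 1 / (2 * HB2 * α)) + min 1 ((1 + 2 * (N:ℝ)) / (2 * HB1 * α))) / 2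
    with hθ_def
  set θ' : ℝ := (max 0 (1 - (1 + 2 * (N:ℝ)) / (2 * HB2 * α)) + min 1 (1 / (2 * HB1 * α))) / 2
    with hθ'_def
  have hmm1 : max 0 (1 - 1 / (2 * HB2 * α)) < min 1 ((1 + 2 * (N:ℝ)) / (2 * HB1 * α)) :=
    max_lt (lt_min one_pos (by positivity))
      (lt_min (by nlinarith [one_div_pos.2 hB]) hL1U1)
  have hmm2 : max 0 (1 - (1 + 2 * (N:ℝ)) / (2 * HB2 * α)) < min 1 (1 / (2 * HB1 * α)) :=
    max_lt (lt_min one_pos (by positivity))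
      (lt_min (by nlinarith [div_pos (by linarith : (0:ℝ) < 1 + 2 * (N:ℝ)) hB]) hL2U2)
  have hθ_lb : max 0 (1 - 1 / (2 * HB2 * α)) < θ := by rw [hθ_def]; linarith
  have hθ_ub : θ < min 1 ((1 + 2 * (N:ℝ)) / (2 * HB1 * α)) := by rw [hθ_def]; linarith
  have hθ'_lb : max 0 (1 - (1 + 2 * (N:ℝ)) / (2 * HB2 * α)) < θ' := by rw [hθ'_def]; linarith
  have hθ'_ub : θ' < min 1 (1 / (2 * HB1 * α)) := by rw [hθ'_def]; linarith
  have hθ0 : 0 ≤ θ := ((le_max_left _ _).trans_lt hθ_lb).le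
  have hθ1 : θ ≤ 1 := (hθ_ub.trans_le (min_le_left _ _)).le
  have hθ'0 : 0 ≤ θ' := ((le_max_left _ _).trans_lt hθ'_lb).le
  have hθ'1 : θ' ≤ 1 := (hθ'_ub.trans_le (min_le_left _ _)).le
  have hθA : 2 * HB1 * α * θ < 1 + 2 * (N:ℝ) := by
    have h := (lt_div_iff₀ hA).mp (hθ_ub.trans_le (min_le_right _ _))
    linarith [mul_comm θ (2 * HB1 * α)]
  have hθB : 2 * HB2 * α * (1 - θ) < 1 := by
    have h' : 1 - 1 / (2 * HB2 * α) < θ := (le_max_right _ _).trans_lt hθ_lb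
    have h := (lt_div_iff₀ hB).mp (by linarith : 1 - θ < 1 / (2 * HB2 * α))
    linarith [mul_comm (1 - θ) (2 * HB2 * α)]
  have hθ'A : 2 * HB1 * α * θ' < 1 := by
    have h := (lt_div_iff₀ hA).mp (hθ'_ub.trans_le (min_le_right _ _))
    linarith [mul_comm θ' (2 * HB1 * α)]
  have hθ'B : 2 * HB2 * α * (1 - θ') < 1 + 2 * (N:ℝ) := by
    have h' : 1 - (1 + 2 * (N:ℝ)) / (2 * HB2 * α) < θ' := (le_max_right _ _).trans_lt hθ'_lb
    have h := (lt_div_iff₀ hB).mp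
      (by linarith : 1 - θ' < (1 + 2 * (N:ℝ)) / (2 * HB2 * α))
    linarith [mul_comm (1 - θ') (2 * HB2 * α)]
  set p : ℝ := max (2 * HB1 * α * θ - 2 * N) (2 * HB1 * α * θ') with hp_def
  set q : ℝ := max (2 * HB2 * α * (1 - θ)) (2 * HB2 * α * (1 - θ') - 2 * N) with hq_def
  have hp : p < 1 := max_lt (by linarith) (by linarith)
  have hq : q < 1 := max_lt (by linarith) (by linarith)
  -- pointwise bound
  have key : ∀ t ∈ Ioc (0:ℝ) 1, ∀ s ∈ Ioc (0:ℝ) 1,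
      (∏ j, (t ^ (2 * H1 j) + s ^ (2 * H2 j)) ^ (-(1:ℝ)/2)) *
          ((t ^ 2 + s ^ 2) / (t ^ (2 * HB1) + s ^ (2 * HB2))) ^ N
        ≤ (2:ℝ) ^ (N + 1) * (t ^ (-p) * s ^ (-q)) := by
    intro t ht s hs
    have hX : 0 < t ^ (2 * HB1) := Real.rpow_pos_of_pos ht.1 _
    have hY : 0 < s ^ (2 * HB2) := Real.rpow_pos_of_pos hs.1 _
    set D : ℝ := t ^ (2 * HB1) + s ^ (2 * HB2) with hD_def
    have hD : 0 < D := by positivity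
    -- step 1 : product bound
    have step1 : (∏ j, (t ^ (2 * H1 j) + s ^ (2 * H2 j)) ^ (-(1:ℝ)/2))
        ≤ D ^ (-(1:ℝ)/2 * d) := by
      have hb1 : ∀ j, (t ^ (2 * H1 j) + s ^ (2 * H2 j)) ^ (-(1:ℝ)/2) ≤ D ^ (-(1:ℝ)/2) := by
        intro j
        refine Real.rpow_le_rpow_of_nonpos (add_pos (Real.rpow_pos_of_pos ht.1 _)
          (Real.rpow_pos_of_pos hs.1 _)) ?_ (by norm_num)
        have e1 : t ^ (2 * HB1) ≤ t ^ (2 * H1 j) :=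
          Real.rpow_le_rpow_of_exponent_ge ht.1 ht.2
            (by have := hB1.2 ⟨j, rfl⟩; linarith)
        have e2 : s ^ (2 * HB2) ≤ s ^ (2 * H2 j) :=
          Real.rpow_le_rpow_of_exponent_ge hs.1 hs.2
            (by have := hB2.2 ⟨j, rfl⟩; linarith)
        rw [hD_def]; exact add_le_add e1 e2
      calc (∏ j, (t ^ (2 * H1 j) + s ^ (2 * H2 j)) ^ (-(1:ℝ)/2))
          ≤ ∏ _j : Fin d, D ^ (-(1:ℝ)/2) :=
            Finset.prod_le_prod (fun j _ => Real.rpow_nonneg (add_nonneg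
              (Real.rpow_nonneg ht.1.le _) (Real.rpow_nonneg hs.1.le _)) _)
              (fun j _ => hb1 j)
        _ = (D ^ (-(1:ℝ)/2)) ^ (d : ℕ) := by
            rw [Finset.prod_const, Finset.card_univ, Fintype.card_fin]
        _ = D ^ (-(1:ℝ)/2 * d) := by
            rw [← Real.rpow_natCast (D ^ (-(1:ℝ)/2)) d, ← Real.rpow_mul hD.le]
    -- step 2 : ratio rewrite
    have step2 : ((t ^ 2 + s ^ 2) / D) ^ N = (t ^ 2 + s ^ 2) ^ N * D ^ (-(N:ℝ)) := by
      rw [div_pow, Real.rpow_neg hD.le, Real.rpow_natCast, div_eq_mul_inv]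
    have hratio_nonneg : 0 ≤ ((t ^ 2 + s ^ 2) / D) ^ N := by positivity
    -- numerator bound
    have hnum : (t ^ 2 + s ^ 2) ^ N ≤ 2 ^ N * (t ^ (2 * N) + s ^ (2 * N)) := by
      have hmax : t ^ 2 + s ^ 2 ≤ 2 * max (t ^ 2) (s ^ 2) := by
        have := le_max_left (t ^ 2) (s ^ 2)
        have := le_max_right (t ^ 2) (s ^ 2)
        linarith
      calc (t ^ 2 + s ^ 2) ^ N ≤ (2 * max (t ^ 2) (s ^ 2)) ^ N :=
            pow_le_pow_left₀ (by positivity) hmax N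
        _ = 2 ^ N * (max (t ^ 2) (s ^ 2)) ^ N := mul_pow 2 _ N
        _ ≤ 2 ^ N * (t ^ (2 * N) + s ^ (2 * N)) := by
            refine mul_le_mul_of_nonneg_left ?_ (by positivity)
            rcases max_cases (t ^ 2) (s ^ 2) with ⟨h, _⟩ | ⟨h, _⟩ <;> rw [h, ← pow_mul]
            · exact le_add_of_nonneg_right (pow_nonneg hs.1.le _)
            · exact le_add_of_nonneg_left (pow_nonneg ht.1.le _)
    -- geometric mean bounds
    have hgeo : ∀ (τ : ℝ), 0 ≤ τ → τ ≤ 1 →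
        D ^ (-α) ≤ t ^ (-(2 * HB1 * α * τ)) * s ^ (-(2 * HB2 * α * (1 - τ))) := by
      intro τ hτ0 hτ1
      have h := geom_aux hX hY hτ0 hτ1 hα_pos.le
      rw [← Real.rpow_mul ht.1.le, ← Real.rpow_mul hs.1.le] at h
      calc D ^ (-α) ≤ t ^ (2 * HB1 * -(τ * α)) * s ^ (2 * HB2 * -((1 - τ) * α)) := h
        _ = t ^ (-(2 * HB1 * α * τ)) * s ^ (-(2 * HB2 * α * (1 - τ))) := by ring_nf
    -- branch bounds
    have branch1 : t ^ (2 * N) * D ^ (-α) ≤ t ^ (-p) * s ^ (-q) := by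
      have h := hgeo θ hθ0 hθ1
      have h2 : t ^ (2 * N) * D ^ (-α)
          ≤ t ^ (2 * N) * (t ^ (-(2 * HB1 * α * θ)) * s ^ (-(2 * HB2 * α * (1 - θ)))) :=
        mul_le_mul_of_nonneg_left h (pow_nonneg ht.1.le _)
      have h3 : t ^ (2 * N) * (t ^ (-(2 * HB1 * α * θ)) * s ^ (-(2 * HB2 * α * (1 - θ))))
          = t ^ (-(2 * HB1 * α * θ - 2 * (N:ℝ))) * s ^ (-(2 * HB2 * α * (1 - θ))) := by
        rw [← Real.rpow_natCast t (2 * N),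
          show (-(2 * HB1 * α * θ - 2 * (N:ℝ))) = ((2 * N : ℕ) : ℝ) + -(2 * HB1 * α * θ) by
            push_cast; ring, Real.rpow_add ht.1]
        ring
      have h4 : t ^ (-(2 * HB1 * α * θ - 2 * (N:ℝ))) ≤ t ^ (-p) :=
        Real.rpow_le_rpow_of_exponent_ge ht.1 ht.2
          (neg_le_neg (by rw [hp_def]; exact le_max_left _ _))
      have h5 : s ^ (-(2 * HB2 * α * (1 - θ))) ≤ s ^ (-q) :=
        Real.rpow_le_rpow_of_exponent_ge hs.1 hs.2
          (neg_le_neg (by rw [hq_def]; exact le_max_left _ _))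
      calc t ^ (2 * N) * D ^ (-α) ≤ _ := h2
        _ = _ := h3
        _ ≤ t ^ (-p) * s ^ (-q) :=
          mul_le_mul h4 h5 (Real.rpow_nonneg hs.1.le _) (Real.rpow_nonneg ht.1.le _)
    have branch2 : s ^ (2 * N) * D ^ (-α) ≤ t ^ (-p) * s ^ (-q) := by
      have h := hgeo θ' hθ'0 hθ'1
      have h2 : s ^ (2 * N) * D ^ (-α)
          ≤ s ^ (2 * N) * (t ^ (-(2 * HB1 * α * θ')) * s ^ (-(2 * HB2 * α * (1 - θ')))) :=
        mul_le_mul_of_nonneg_left h (pow_nonneg hs.1.le _)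
      have h3 : s ^ (2 * N) * (t ^ (-(2 * HB1 * α * θ')) * s ^ (-(2 * HB2 * α * (1 - θ'))))
          = t ^ (-(2 * HB1 * α * θ')) * s ^ (-(2 * HB2 * α * (1 - θ') - 2 * (N:ℝ))) := by
        rw [← Real.rpow_natCast s (2 * N),
          show (-(2 * HB2 * α * (1 - θ') - 2 * (N:ℝ)))
              = ((2 * N : ℕ) : ℝ) + -(2 * HB2 * α * (1 - θ')) by push_cast; ring,
          Real.rpow_add hs.1]
        ring
      have h4 : t ^ (-(2 * HB1 * α * θ')) ≤ t ^ (-p) :=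
        Real.rpow_le_rpow_of_exponent_ge ht.1 ht.2
          (neg_le_neg (by rw [hp_def]; exact le_max_right _ _))
      have h5 : s ^ (-(2 * HB2 * α * (1 - θ') - 2 * (N:ℝ))) ≤ s ^ (-q) :=
        Real.rpow_le_rpow_of_exponent_ge hs.1 hs.2
          (neg_le_neg (by rw [hq_def]; exact le_max_right _ _))
      calc s ^ (2 * N) * D ^ (-α) ≤ _ := h2
        _ = _ := h3
        _ ≤ t ^ (-p) * s ^ (-q) :=
          mul_le_mul h4 h5 (Real.rpow_nonneg hs.1.le _) (Real.rpow_nonneg ht.1.le _)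
    -- assemble
    have hDexp : D ^ (-(1:ℝ)/2 * d) * D ^ (-(N:ℝ)) = D ^ (-α) := by
      rw [← Real.rpow_add hD, hα_def]
      ring_nf
    calc (∏ j, (t ^ (2 * H1 j) + s ^ (2 * H2 j)) ^ (-(1:ℝ)/2)) *
            ((t ^ 2 + s ^ 2) / D) ^ N
        ≤ D ^ (-(1:ℝ)/2 * d) * ((t ^ 2 + s ^ 2) / D) ^ N :=
          mul_le_mul_of_nonneg_right step1 hratio_nonneg
      _ = (t ^ 2 + s ^ 2) ^ N * (D ^ (-(1:ℝ)/2 * d) * D ^ (-(N:ℝ))) := by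
          rw [step2]; ring
      _ = (t ^ 2 + s ^ 2) ^ N * D ^ (-α) := by rw [hDexp]
      _ ≤ (2 ^ N * (t ^ (2 * N) + s ^ (2 * N))) * D ^ (-α) :=
          mul_le_mul_of_nonneg_right hnum (Real.rpow_nonneg hD.le _)
      _ = 2 ^ N * (t ^ (2 * N) * D ^ (-α) + s ^ (2 * N) * D ^ (-α)) := by ring
      _ ≤ 2 ^ N * (t ^ (-p) * s ^ (-q) + t ^ (-p) * s ^ (-q)) := by
          refine mul_le_mul_of_nonneg_left (add_le_add branch1 branch2) (by positivity)
      _ = (2:ℝ) ^ (N + 1) * (t ^ (-p) * s ^ (-q)) := by rw [pow_succ]; ring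
  -- finish
  refine lt_of_le_of_lt ?_ (prod_fin hp hq (by positivity : (0:ℝ) ≤ (2:ℝ) ^ (N + 1)))
  refine setLIntegral_mono' measurableSet_Ioc fun t ht => ?_
  refine setLIntegral_mono' measurableSet_Ioc fun s hs => ?_
  exact ENNReal.ofReal_le_ofReal (key t ht s hs)
end

section
/- Let H ∈ (0,1) and let u, v be reals with 0 < v < u. Then u^{2H}·v^{2H} − (1/4)·(u^{2H} + v^{2H} − (u − v)^{2H})² > 0; equivalently, (u^{2H} + v^{2H} − (u−v)^{2H})² < 4·u^{2H}·v^{2H}. -/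
lemma rpow_strict_subadd {H a b : ℝ} (h0 : 0 < H) (h1 : H < 1) (ha : 0 < a) (hb : 0 < b) :
    (a + b) ^ H < a ^ H + b ^ H := by
  have hab : 0 < a + b := by linarith
  have h1a : (a + b) ^ (H - 1) < a ^ (H - 1) :=
    Real.rpow_lt_rpow_of_neg ha (by linarith) (by linarith)
  have h1b : (a + b) ^ (H - 1) < b ^ (H - 1) :=
    Real.rpow_lt_rpow_of_neg hb (by linarith) (by linarith)
  have ea : a ^ H = a ^ (H - 1) * a := by
    rw [← Real.rpow_add_one ha.ne' (H - 1)]; ring_nf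
  have eb : b ^ H = b ^ (H - 1) * b := by
    rw [← Real.rpow_add_one hb.ne' (H - 1)]; ring_nf
  have eab : (a + b) ^ H = (a + b) ^ (H - 1) * a + (a + b) ^ (H - 1) * b := by
    rw [← mul_add, ← Real.rpow_add_one hab.ne' (H - 1)]; ring_nf
  rw [ea, eb, eab]
  have := mul_lt_mul_of_pos_right h1a ha
  have := mul_lt_mul_of_pos_right h1b hb
  linarith

/-- For `H ∈ (0,1)` and `0 < v < u`,
`u^{2H} v^{2H} - (1/4)(u^{2H} + v^{2H} - (u-v)^{2H})² > 0`. -/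
theorem phi_pos (H : ℝ) (hH : H ∈ Set.Ioo (0:ℝ) 1) (u v : ℝ) (hv : 0 < v) (hvu : v < u) :
    0 < u ^ (2 * H) * v ^ (2 * H) -
        1/4 * (u ^ (2 * H) + v ^ (2 * H) - (u - v) ^ (2 * H)) ^ 2 ∧
      (u ^ (2 * H) + v ^ (2 * H) - (u - v) ^ (2 * H)) ^ 2 <
        4 * (u ^ (2 * H) * v ^ (2 * H)) := by
  obtain ⟨hH0, hH1⟩ := hH
  have hu : 0 < u := hv.trans hvu
  have hw : 0 < u - v := by linarith
  set x := u ^ H with hx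
  set y := v ^ H with hy
  set z := (u - v) ^ H with hz
  have hxp : 0 < x := Real.rpow_pos_of_pos hu H
  have hyp : 0 < y := Real.rpow_pos_of_pos hv H
  have hzp : 0 < z := Real.rpow_pos_of_pos hw H
  have hzx : z < x := Real.rpow_lt_rpow hw.le (by linarith) hH0
  have hsub : x < z + y := by
    have := rpow_strict_subadd hH0 hH1 hw hv
    have huv : u - v + v = u := by ring
    rwa [huv] at this
  have eu : u ^ (2 * H) = x ^ 2 := by
    rw [hx, ← Real.rpow_natCast (u ^ H) 2, ← Real.rpow_mul hu.le]
    norm_num; ring_nf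
  have ev : v ^ (2 * H) = y ^ 2 := by
    rw [hy, ← Real.rpow_natCast (v ^ H) 2, ← Real.rpow_mul hv.le]
    norm_num; ring_nf
  have ew : (u - v) ^ (2 * H) = z ^ 2 := by
    rw [hz, ← Real.rpow_natCast ((u - v) ^ H) 2, ← Real.rpow_mul hw.le]
    norm_num; ring_nf
  rw [eu, ev, ew]
  have hxy : y < x := Real.rpow_lt_rpow hv.le hvu hH0
  have key : (x ^ 2 + y ^ 2 - z ^ 2) ^ 2 < 4 * (x ^ 2 * y ^ 2) := by
    have h1 : 0 < x + y - z := by linarith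
    have h2 : 0 < z + y - x := by linarith
    have h3 : 0 < x + y + z := by linarith
    have h4 : 0 < z + x - y := by linarith
    nlinarith [mul_pos (mul_pos h1 h3) (mul_pos h2 h4)]
  exact ⟨by linarith, key⟩
end

section
/- Let H1, H2 ∈ (0,1), let ε > 0, and let t, t', s, s' ≥ 0. Then (1/4)·( t^{2H1} + t'^{2H1} − |t − t'|^{2H1} + s^{2H2} + s'^{2H2} − |s − s'|^{2H2} )² < (ε + t^{2H1} + s^{2H2})·(ε + t'^{2H1} + s'^{2H2}). -/
lemma rpow_add_le_add_rpow_real {x y p : ℝ} (hx : 0 ≤ x) (hy : 0 ≤ y)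
    (hp : 0 ≤ p) (hp1 : p ≤ 1) : (x + y) ^ p ≤ x ^ p + y ^ p := by
  have h := NNReal.rpow_add_le_add_rpow x.toNNReal y.toNNReal hp hp1
  have h' := NNReal.coe_le_coe.2 h
  simpa [← Real.toNNReal_add hx hy, NNReal.coe_rpow, Real.coe_toNNReal _ hx,
    Real.coe_toNNReal _ hy, Real.coe_toNNReal _ (add_nonneg hx hy)] using h'

lemma kern_bounds {H t t' : ℝ} (hH0 : 0 ≤ H) (hH1 : H ≤ 1) (ht : 0 ≤ t) (ht' : 0 ≤ t') :
    (t ^ H - t' ^ H) ^ 2 ≤ |t - t'| ^ (2 * H) ∧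
      |t - t'| ^ (2 * H) ≤ (t ^ H + t' ^ H) ^ 2 := by
  have habs : (0:ℝ) ≤ |t - t'| := abs_nonneg _
  have hsq : |t - t'| ^ (2 * H) = (|t - t'| ^ H) ^ 2 := by
    rw [mul_comm, Real.rpow_mul habs, Real.rpow_two]
  rw [hsq]
  -- wlog-like case split
  rcases le_total t' t with hle | hle
  · have habseq : |t - t'| = t - t' := abs_of_nonneg (by linarith)
    have hsub : 0 ≤ t - t' := by linarith
    have hadd : t ^ H ≤ (t - t') ^ H + t' ^ H := by
      have := rpow_add_le_add_rpow_real hsub ht' hH0 hH1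
      simpa [sub_add_cancel] using this
    have hmono : (t - t') ^ H ≤ t ^ H :=
      Real.rpow_le_rpow hsub (by linarith) hH0
    have h0 : (0:ℝ) ≤ t' ^ H := Real.rpow_nonneg ht' H
    have h1 : t' ^ H ≤ t ^ H := Real.rpow_le_rpow ht' hle hH0
    have hc : (0:ℝ) ≤ (t - t') ^ H := Real.rpow_nonneg hsub H
    constructor
    · rw [habseq]; nlinarith
    · rw [habseq]; nlinarith
  · have habseq : |t - t'| = t' - t := by rw [abs_of_nonpos (by linarith : t - t' ≤ 0)]; ring
    have hsub : 0 ≤ t' - t := by linarith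
    have hadd : t' ^ H ≤ (t' - t) ^ H + t ^ H := by
      have := rpow_add_le_add_rpow_real hsub ht hH0 hH1
      simpa [sub_add_cancel] using this
    have hmono : (t' - t) ^ H ≤ t' ^ H :=
      Real.rpow_le_rpow hsub (by linarith) hH0
    have h0 : (0:ℝ) ≤ t ^ H := Real.rpow_nonneg ht H
    have h1 : t ^ H ≤ t' ^ H := Real.rpow_le_rpow ht hle hH0
    have hc : (0:ℝ) ≤ (t' - t) ^ H := Real.rpow_nonneg hsub H
    constructor
    · rw [habseq]; nlinarith
    · rw [habseq]; nlinarith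

set_option maxHeartbeats 1000000 in
/-- For `H1, H2 ∈ (0,1)`, `ε > 0` and `t, t', s, s' ≥ 0`,
`(1/4)(t^{2H1} + t'^{2H1} - |t-t'|^{2H1} + s^{2H2} + s'^{2H2} - |s-s'|^{2H2})²
  < (ε + t^{2H1} + s^{2H2})(ε + t'^{2H1} + s'^{2H2})`. -/
theorem covariance_bound_eps (H1 H2 : ℝ) (h1 : H1 ∈ Set.Ioo (0:ℝ) 1)
    (h2 : H2 ∈ Set.Ioo (0:ℝ) 1) (ε : ℝ) (hε : 0 < ε)
    (t t' s s' : ℝ) (ht : 0 ≤ t) (ht' : 0 ≤ t') (hs : 0 ≤ s) (hs' : 0 ≤ s') :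
    1/4 * (t ^ (2 * H1) + t' ^ (2 * H1) - |t - t'| ^ (2 * H1) +
            s ^ (2 * H2) + s' ^ (2 * H2) - |s - s'| ^ (2 * H2)) ^ 2 <
      (ε + t ^ (2 * H1) + s ^ (2 * H2)) * (ε + t' ^ (2 * H1) + s' ^ (2 * H2)) := by
  obtain ⟨hH1a, hH1b⟩ := h1
  obtain ⟨hH2a, hH2b⟩ := h2
  have e1 : t ^ (2 * H1) = (t ^ H1) ^ 2 := by
    rw [mul_comm, Real.rpow_mul ht, Real.rpow_two]
  have e2 : t' ^ (2 * H1) = (t' ^ H1) ^ 2 := by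
    rw [mul_comm, Real.rpow_mul ht', Real.rpow_two]
  have e3 : s ^ (2 * H2) = (s ^ H2) ^ 2 := by
    rw [mul_comm, Real.rpow_mul hs, Real.rpow_two]
  have e4 : s' ^ (2 * H2) = (s' ^ H2) ^ 2 := by
    rw [mul_comm, Real.rpow_mul hs', Real.rpow_two]
  obtain ⟨k1, k2⟩ := kern_bounds hH1a.le hH1b.le ht ht'
  obtain ⟨k3, k4⟩ := kern_bounds hH2a.le hH2b.le hs hs'
  set a := t ^ H1
  set a' := t' ^ H1
  set b := s ^ H2
  set b' := s' ^ H2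
  set C := |t - t'| ^ (2 * H1)
  set D := |s - s'| ^ (2 * H2)
  have ha : 0 ≤ a := Real.rpow_nonneg ht _
  have ha' : 0 ≤ a' := Real.rpow_nonneg ht' _
  have hb : 0 ≤ b := Real.rpow_nonneg hs _
  have hb' : 0 ≤ b' := Real.rpow_nonneg hs' _
  rw [e1, e2, e3, e4]
  -- X = a²+a'²-C, Y = b²+b'²-D, |X| ≤ 2aa', |Y| ≤ 2bb'
  have hX1 : a ^ 2 + a' ^ 2 - C ≤ 2 * a * a' := by nlinarith
  have hX2 : -(2 * a * a') ≤ a ^ 2 + a' ^ 2 - C := by nlinarith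
  have hY1 : b ^ 2 + b' ^ 2 - D ≤ 2 * b * b' := by nlinarith
  have hY2 : -(2 * b * b') ≤ b ^ 2 + b' ^ 2 - D := by nlinarith
  have key1 : (a ^ 2 + a' ^ 2 - C + b ^ 2 + b' ^ 2 - D) ^ 2 ≤
      (2 * a * a' + 2 * b * b') ^ 2 :=
    sq_le_sq' (by linarith) (by linarith)
  have key2 : (2 * a * a' + 2 * b * b') ^ 2 ≤
      4 * (a ^ 2 + b ^ 2) * (a' ^ 2 + b' ^ 2) := by
    nlinarith [sq_nonneg (a*b' - a'*b)]
  have key : (a ^ 2 + a' ^ 2 - C + b ^ 2 + b' ^ 2 - D) ^ 2 ≤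
      4 * (a ^ 2 + b ^ 2) * (a' ^ 2 + b' ^ 2) := key1.trans key2
  have hr1 : 0 ≤ ε * (a ^ 2 + b ^ 2) :=
    mul_nonneg hε.le (add_nonneg (sq_nonneg a) (sq_nonneg b))
  have hr2 : 0 ≤ ε * (a' ^ 2 + b' ^ 2) :=
    mul_nonneg hε.le (add_nonneg (sq_nonneg a') (sq_nonneg b'))
  nlinarith [mul_pos hε hε]
end

section
/- Let H1, H2 ∈ (0,1) and let t, t', s, s' > 0 with t ≠ t' and s ≠ s'. Then (1/4)·( t^{2H1} + t'^{2H1} − |t − t'|^{2H1} + s^{2H2} + s'^{2H2} − |s − s'|^{2H2} )² < (t^{2H1} + s^{2H2})·(t'^{2H1} + s'^{2H2}). -/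
open Real

lemma strict_subadd (H u v : ℝ) (hH0 : 0 < H) (hH1 : H < 1) (hu : 0 < u) (hv : 0 < v) :
    (u + v) ^ H < u ^ H + v ^ H := by
  have huv : 0 < u + v := by linarith
  have h1 : (u + v) ^ H = u * (u + v) ^ (H - 1) + v * (u + v) ^ (H - 1) := by
    rw [← add_mul]
    rw [show (u + v) * (u + v) ^ (H - 1) = (u + v) ^ (1:ℝ) * (u + v) ^ (H - 1) by
      rw [rpow_one]]
    rw [← rpow_add huv]; ring_nf
  have hu' : (u + v) ^ (H - 1) < u ^ (H - 1) :=
    rpow_lt_rpow_of_neg hu (by linarith) (by linarith)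
  have hv' : (u + v) ^ (H - 1) < v ^ (H - 1) :=
    rpow_lt_rpow_of_neg hv (by linarith) (by linarith)
  have hu2 : u * (u + v) ^ (H - 1) < u ^ H := by
    have : u * u ^ (H - 1) = u ^ H := by
      rw [show u * u ^ (H - 1) = u ^ (1:ℝ) * u ^ (H - 1) by rw [rpow_one],
        ← rpow_add hu]; ring_nf
    nlinarith
  have hv2 : v * (u + v) ^ (H - 1) < v ^ H := by
    have : v * v ^ (H - 1) = v ^ H := by
      rw [show v * v ^ (H - 1) = v ^ (1:ℝ) * v ^ (H - 1) by rw [rpow_one],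
        ← rpow_add hv]; ring_nf
    nlinarith
  linarith

lemma sq_rpow (u H : ℝ) (hu : 0 ≤ u) : u ^ (2 * H) = (u ^ H) ^ 2 := by
  rw [mul_comm, rpow_mul hu, rpow_two]

/-- Core: two-sided bound, WLOG-free. -/
lemma key (H x y : ℝ) (hH0 : 0 < H) (hH1 : H < 1) (hx : 0 < x) (hy : 0 < y)
    (hxy : x ≠ y) :
    -(2 * x ^ H * y ^ H) < x ^ (2 * H) + y ^ (2 * H) - |x - y| ^ (2 * H) ∧
      x ^ (2 * H) + y ^ (2 * H) - |x - y| ^ (2 * H) < 2 * x ^ H * y ^ H := by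
  wlog h : x < y generalizing x y
  · have h' : y < x := lt_of_le_of_ne (not_lt.mp h) (Ne.symm hxy)
    have := this y x hy hx (Ne.symm hxy) h'
    rwa [abs_sub_comm, show y ^ (2*H) + x ^ (2*H) = x ^ (2*H) + y ^ (2*H) by ring,
      show 2 * y ^ H * x ^ H = 2 * x ^ H * y ^ H by ring] at this
  set u := y - x with hu
  have hupos : 0 < u := by simp [hu]; linarith
  have habs : |x - y| = u := by rw [abs_sub_comm]; exact abs_of_pos hupos
  rw [habs, sq_rpow x H hx.le, sq_rpow y H hy.le, sq_rpow u H hupos.le]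
  have hxH : 0 < x ^ H := rpow_pos_of_pos hx H
  have hyH : 0 < y ^ H := rpow_pos_of_pos hy H
  have huH : 0 < u ^ H := rpow_pos_of_pos hupos H
  -- y^H < x^H + u^H  (strict subadditivity, y = x + u)
  have hsub : y ^ H < x ^ H + u ^ H := by
    have := strict_subadd H x u hH0 hH1 hx hupos
    rwa [show x + u = y by simp [hu]] at this
  -- u^H < y^H  (u < y)
  have hlt : u ^ H < y ^ H := rpow_lt_rpow hupos.le (by linarith) hH0
  -- also x^H < y^H
  have hlt2 : x ^ H < y ^ H := rpow_lt_rpow hx.le h hH0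
  constructor
  · nlinarith
  · nlinarith

/-- For `H1, H2 ∈ (0,1)` and `t, t', s, s' > 0` with `t ≠ t'`, `s ≠ s'`,
`(1/4)(t^{2H1} + t'^{2H1} - |t-t'|^{2H1} + s^{2H2} + s'^{2H2} - |s-s'|^{2H2})²
  < (t^{2H1} + s^{2H2})(t'^{2H1} + s'^{2H2})`. -/
theorem covariance_bound (H1 H2 : ℝ) (h1 : H1 ∈ Set.Ioo (0:ℝ) 1)
    (h2 : H2 ∈ Set.Ioo (0:ℝ) 1)
    (t t' s s' : ℝ) (ht : 0 < t) (ht' : 0 < t') (hs : 0 < s) (hs' : 0 < s')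
    (htt : t ≠ t') (hss : s ≠ s') :
    1/4 * (t ^ (2 * H1) + t' ^ (2 * H1) - |t - t'| ^ (2 * H1) +
            s ^ (2 * H2) + s' ^ (2 * H2) - |s - s'| ^ (2 * H2)) ^ 2 <
      (t ^ (2 * H1) + s ^ (2 * H2)) * (t' ^ (2 * H1) + s' ^ (2 * H2)) := by
  obtain ⟨hH1a, hH1b⟩ := h1
  obtain ⟨hH2a, hH2b⟩ := h2
  obtain ⟨k1l, k1u⟩ := key H1 t t' hH1a hH1b ht ht' htt
  obtain ⟨k2l, k2u⟩ := key H2 s s' hH2a hH2b hs hs' hss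
  have hα : 0 < t ^ H1 := rpow_pos_of_pos ht H1
  have hα' : 0 < t' ^ H1 := rpow_pos_of_pos ht' H1
  have hβ : 0 < s ^ H2 := rpow_pos_of_pos hs H2
  have hβ' : 0 < s' ^ H2 := rpow_pos_of_pos hs' H2
  rw [sq_rpow t H1 ht.le, sq_rpow t' H1 ht'.le, sq_rpow s H2 hs.le,
    sq_rpow s' H2 hs'.le] at *
  set X := (t ^ H1) ^ 2 + (t' ^ H1) ^ 2 - |t - t'| ^ (2 * H1) with hX
  set Y := (s ^ H2) ^ 2 + (s' ^ H2) ^ 2 - |s - s'| ^ (2 * H2) with hY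
  have hXsq : X ^ 2 < (2 * t ^ H1 * t' ^ H1) ^ 2 := sq_lt_sq' k1l k1u
  have hYsq : Y ^ 2 < (2 * s ^ H2 * s' ^ H2) ^ 2 := sq_lt_sq' k2l k2u
  have hXY : X * Y < (2 * t ^ H1 * t' ^ H1) * (2 * s ^ H2 * s' ^ H2) := by
    calc X * Y ≤ |X * Y| := le_abs_self _
    _ = |X| * |Y| := abs_mul _ _
    _ < (2 * t ^ H1 * t' ^ H1) * (2 * s ^ H2 * s' ^ H2) := by
        apply mul_lt_mul'' (abs_lt.mpr ⟨k1l, k1u⟩) (abs_lt.mpr ⟨k2l, k2u⟩)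
          (abs_nonneg _) (abs_nonneg _)
  have hCS := sq_nonneg (t ^ H1 * s' ^ H2 - t' ^ H1 * s ^ H2)
  nlinarith [hXsq, hYsq, hXY, hCS]
end

section
/- Fix ρ ∈ (0,1). Then the function ψ_ρ : (0,1) → ℝ defined by ψ_ρ(H) = ρ^{2H} − (1/4)·(1 + ρ^{2H} − (1 − ρ)^{2H})² is decreasing in H; that is, for all 0 < H ≤ H' < 1, ψ_ρ(H') ≤ ψ_ρ(H). -/
/-- For fixed `ρ ∈ (0,1)`, the function
`ψ_ρ(H) = ρ^{2H} - (1/4)(1 + ρ^{2H} - (1-ρ)^{2H})²` is decreasing in `H ∈ (0,1)`. -/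
theorem psi_decreasing (ρ : ℝ) (hρ : ρ ∈ Set.Ioo (0:ℝ) 1)
    (H H' : ℝ) (hH : 0 < H) (hHH' : H ≤ H') (hH' : H' < 1) :
    ρ ^ (2 * H') - 1/4 * (1 + ρ ^ (2 * H') - (1 - ρ) ^ (2 * H')) ^ 2 ≤
      ρ ^ (2 * H) - 1/4 * (1 + ρ ^ (2 * H) - (1 - ρ) ^ (2 * H)) ^ 2 := by
  obtain ⟨hρ0, hρ1⟩ := hρ
  have hσ0 : (0:ℝ) < 1 - ρ := by linarith
  have hσ1 : 1 - ρ < 1 := by linarith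
  set a := ρ ^ (2 * H) with ha
  set a' := ρ ^ (2 * H') with ha'
  set b := (1 - ρ) ^ (2 * H) with hb
  set b' := (1 - ρ) ^ (2 * H') with hb'
  have h2H : 0 < 2 * H := by linarith
  have h2H' : 0 < 2 * H' := by linarith
  have haa : a' ≤ a := Real.rpow_le_rpow_of_exponent_ge hρ0 hρ1.le (by linarith)
  have hbb : b' ≤ b := Real.rpow_le_rpow_of_exponent_ge hσ0 hσ1.le (by linarith)
  have ha1 : a < 1 := Real.rpow_lt_one hρ0.le hρ1 h2H
  have ha'1 : a' < 1 := Real.rpow_lt_one hρ0.le hρ1 h2H'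
  have hb1 : b < 1 := Real.rpow_lt_one hσ0.le hσ1 h2H
  have hb'0 : 0 < b' := Real.rpow_pos_of_pos hσ0 _
  have ha'0 : 0 < a' := Real.rpow_pos_of_pos hρ0 _
  nlinarith [mul_nonneg (sub_nonneg.mpr haa) (by linarith : (0:ℝ) ≤ 4 - (2 + a + a' - b - b')),
    mul_nonneg (sub_nonneg.mpr hbb) (by linarith : (0:ℝ) ≤ 2 + a + a' - b - b')]
end

section
/- Let 0 < H ≤ H' < 1 and let u, v be reals with 0 < v < u ≤ 1. Then φ_{H'}(u, v) ≤ φ_H(u, v). -/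
/-- `φ_H(u,v) := u^{2H} v^{2H} - (1/4)(u^{2H} + v^{2H} - |u-v|^{2H})²`. -/
noncomputable def phi (H u v : ℝ) : ℝ :=
  u ^ (2 * H) * v ^ (2 * H) - 1/4 * (u ^ (2 * H) + v ^ (2 * H) - |u - v| ^ (2 * H)) ^ 2

lemma f_nonneg (y s : ℝ) (hy0 : 0 ≤ y) (hy1 : y ≤ 1) (hs0 : 0 ≤ s) (hs1 : s ≤ 1)
    (h : 1 ≤ y + s) : 0 ≤ y ^ 2 - 1/4 * (1 + y ^ 2 - s ^ 2) ^ 2 := by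
  have hP : 0 ≤ (y + s - 1) * (1 + y - s) :=
    mul_nonneg (by linarith) (by linarith)
  have hQ : 0 ≤ (s + 1 - y) * (1 + y + s) :=
    mul_nonneg (by linarith) (by linarith)
  nlinarith [mul_nonneg hP hQ]

lemma f_mono (a c a' c' : ℝ) (h0a : 0 ≤ a') (haa : a' ≤ a) (ha1 : a ≤ 1)
    (h0c : 0 ≤ c') (hcc : c' ≤ c) (hc1 : c ≤ 1) :
    a' - 1/4 * (1 + a' - c') ^ 2 ≤ a - 1/4 * (1 + a - c) ^ 2 := by
  nlinarith [mul_nonneg (sub_nonneg.2 haa) (by linarith : (0:ℝ) ≤ 2 - a - a' + 2 * c'),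
    mul_nonneg (sub_nonneg.2 hcc) (by linarith : (0:ℝ) ≤ 2 + 2 * a - c - c')]

lemma phi_scale (H u t : ℝ) (hu : 0 < u) (ht0 : 0 ≤ t) (ht1 : t ≤ 1) :
    phi H u (u * t) =
      (u ^ (2 * H)) ^ 2 * (t ^ (2 * H) - 1/4 * (1 + t ^ (2 * H) - (1 - t) ^ (2 * H)) ^ 2) := by
  have h1 : u - u * t = u * (1 - t) := by ring
  have h2 : |u - u * t| = u * (1 - t) := by
    rw [h1, abs_of_nonneg (mul_nonneg hu.le (by linarith))]
  unfold phi
  rw [h2, Real.mul_rpow hu.le ht0, Real.mul_rpow hu.le (by linarith : (0:ℝ) ≤ 1 - t)]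
  ring

lemma rpow_sq (x p : ℝ) (hx : 0 ≤ x) : x ^ (2 * p) = (x ^ p) ^ 2 := by
  rw [show 2 * p = p * 2 by ring, Real.rpow_mul hx, show ((2:ℝ) = ((2:ℕ):ℝ)) by norm_num,
    Real.rpow_natCast]

/-- For `0 < H ≤ H' < 1` and `0 < v < u ≤ 1`, `φ_{H'}(u,v) ≤ φ_H(u,v)`. -/
theorem phi_antitone_in_H (H H' : ℝ) (hH : 0 < H) (hHH' : H ≤ H') (hH' : H' < 1)
    (u v : ℝ) (hv : 0 < v) (hvu : v < u) (hu : u ≤ 1) :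
    phi H' u v ≤ phi H u v := by
  have hu0 : 0 < u := hv.trans hvu
  set t : ℝ := v / u with htdef
  have ht0 : 0 < t := div_pos hv hu0
  have ht1 : t < 1 := (div_lt_one hu0).2 hvu
  have hveq : v = u * t := by rw [htdef]; field_simp
  have ht0' : (0:ℝ) < 1 - t := by linarith
  have e1 : phi H u v =
      (u ^ (2 * H)) ^ 2 * (t ^ (2 * H) - 1/4 * (1 + t ^ (2 * H) - (1 - t) ^ (2 * H)) ^ 2) := by
    rw [hveq]; exact phi_scale H u t hu0 ht0.le ht1.le
  have e2 : phi H' u v =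
      (u ^ (2 * H')) ^ 2 * (t ^ (2 * H') - 1/4 * (1 + t ^ (2 * H') - (1 - t) ^ (2 * H')) ^ 2) := by
    rw [hveq]; exact phi_scale H' u t hu0 ht0.le ht1.le
  rw [e1, e2]
  -- comparisons of rpow values
  have ha : t ^ (2 * H') ≤ t ^ (2 * H) :=
    Real.rpow_le_rpow_of_exponent_ge ht0 ht1.le (by linarith)
  have ha1 : t ^ (2 * H) ≤ 1 := Real.rpow_le_one ht0.le ht1.le (by linarith)
  have ha0 : (0:ℝ) ≤ t ^ (2 * H') := Real.rpow_nonneg ht0.le _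
  have hc : (1 - t) ^ (2 * H') ≤ (1 - t) ^ (2 * H) :=
    Real.rpow_le_rpow_of_exponent_ge ht0' (by linarith) (by linarith)
  have hc1 : (1 - t) ^ (2 * H) ≤ 1 := Real.rpow_le_one ht0'.le (by linarith) (by linarith)
  have hc0 : (0:ℝ) ≤ (1 - t) ^ (2 * H') := Real.rpow_nonneg ht0'.le _
  -- nonnegativity of the H' factor
  have hf0 : 0 ≤ t ^ (2 * H') - 1/4 * (1 + t ^ (2 * H') - (1 - t) ^ (2 * H')) ^ 2 := by
    have hy : t ^ (2 * H') = (t ^ H') ^ 2 := rpow_sq t H' ht0.le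
    have hs : (1 - t) ^ (2 * H') = ((1 - t) ^ H') ^ 2 := rpow_sq (1 - t) H' ht0'.le
    rw [hy, hs]
    have hyge : t ≤ t ^ H' := by
      have := Real.rpow_le_rpow_of_exponent_ge ht0 ht1.le hH'.le
      rwa [Real.rpow_one] at this
    have hsge : 1 - t ≤ (1 - t) ^ H' := by
      have := Real.rpow_le_rpow_of_exponent_ge ht0' (by linarith) hH'.le
      rwa [Real.rpow_one] at this
    exact f_nonneg _ _ (Real.rpow_nonneg ht0.le _)
      (Real.rpow_le_one ht0.le ht1.le (by linarith))
      (Real.rpow_nonneg ht0'.le _)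
      (Real.rpow_le_one ht0'.le (by linarith) (by linarith))
      (by linarith)
  have hmono : t ^ (2 * H') - 1/4 * (1 + t ^ (2 * H') - (1 - t) ^ (2 * H')) ^ 2 ≤
      t ^ (2 * H) - 1/4 * (1 + t ^ (2 * H) - (1 - t) ^ (2 * H)) ^ 2 :=
    f_mono _ _ _ _ ha0 ha ha1 hc0 hc hc1
  have hpow : (u ^ (2 * H')) ^ 2 ≤ (u ^ (2 * H)) ^ 2 := by
    have h1 : u ^ (2 * H') ≤ u ^ (2 * H) :=
      Real.rpow_le_rpow_of_exponent_ge hu0 hu (by linarith)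
    exact pow_le_pow_left₀ (Real.rpow_nonneg hu0.le _) h1 2
  calc (u ^ (2 * H')) ^ 2 * (t ^ (2 * H') - 1/4 * (1 + t ^ (2 * H') - (1 - t) ^ (2 * H')) ^ 2)
      ≤ (u ^ (2 * H)) ^ 2 * (t ^ (2 * H') - 1/4 * (1 + t ^ (2 * H') - (1 - t) ^ (2 * H')) ^ 2) :=
        mul_le_mul_of_nonneg_right hpow hf0
    _ ≤ (u ^ (2 * H)) ^ 2 * (t ^ (2 * H) - 1/4 * (1 + t ^ (2 * H) - (1 - t) ^ (2 * H)) ^ 2) :=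
        mul_le_mul_of_nonneg_left hmono (sq_nonneg _)
end

section
/- Let H ∈ (0,1) and let ε be a real number with 0 < ε < 1/(2H). Then the integral ∫₀^{π/4} (φ_H(cos θ, sin θ))^{ε − 1/(2H)} dθ is finite. -/
open MeasureTheory Set Real

lemma aux_mono (H b : ℝ) (hH0 : 0 < H) (hH1 : H < 1) (hb : 0 < b) :
    StrictMonoOn (fun x : ℝ => x ^ H - (x + b) ^ H) (Ici b) := by
  apply strictMonoOn_of_deriv_pos (convex_Ici b)
  · apply ContinuousOn.sub
    · exact (continuousOn_id.rpow_const fun x hx => Or.inl (by have := hb.trans_le hx; positivity))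
    · exact ((continuousOn_id.add continuousOn_const).rpow_const
        fun x hx => Or.inl (by have := hb.trans_le (mem_Ici.1 hx); show x + b ≠ 0; positivity))
  · intro x hx
    rw [interior_Ici] at hx
    have hx0 : 0 < x := hb.trans hx
    have h1 : HasDerivAt (fun x : ℝ => x ^ H - (x + b) ^ H)
        (1 * H * x ^ (H - 1) - 1 * H * (x + b) ^ (H - 1)) x :=
      ((hasDerivAt_id x).rpow_const (Or.inl hx0.ne')).sub
        (((hasDerivAt_id x).add_const b).rpow_const (Or.inl (by positivity)))
    rw [h1.deriv]
    have : (x + b) ^ (H - 1) < x ^ (H - 1) :=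
      Real.rpow_lt_rpow_of_neg hx0 (by linarith) (by linarith)
    nlinarith

lemma aux_sub (H a b : ℝ) (hH0 : 0 < H) (hH1 : H < 1) (hb : 0 < b) (hab : b ≤ a) :
    (2 - 2 ^ H) * b ^ H ≤ a ^ H + b ^ H - (a + b) ^ H := by
  have h := (aux_mono H b hH0 hH1 hb).monotoneOn (self_mem_Ici) (mem_Ici.2 hab) hab
  have h2 : (b + b) ^ H = 2 ^ H * b ^ H := by
    rw [← Real.mul_rpow (by norm_num) hb.le, two_mul]
  linarith

lemma aux_sub_min (H v s : ℝ) (hH0 : 0 < H) (hH1 : H < 1) (hv : 0 < v) (hs : 0 < s) :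
    (2 - 2 ^ H) * (min v s) ^ H ≤ s ^ H + v ^ H - (v + s) ^ H := by
  rcases le_total v s with h | h
  · have := aux_sub H s v hH0 hH1 hv h
    rw [min_eq_left h, add_comm v s] at *; linarith
  · have := aux_sub H v s hH0 hH1 hs h
    rw [min_eq_right h]; linarith

lemma phi_eq (H u v : ℝ) (hv : 0 ≤ v) (hvu : v ≤ u) :
    phi H u v = 1/4 * (((u - v) ^ H + v ^ H - u ^ H) * ((u - v) ^ H + u ^ H - v ^ H)
      * ((u ^ H + v ^ H) ^ 2 - ((u - v) ^ H) ^ 2)) := by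
  have hu : (0:ℝ) ≤ u := hv.trans hvu
  have hs : (0:ℝ) ≤ u - v := by linarith
  have e1 : ∀ x : ℝ, 0 ≤ x → x ^ (2 * H) = (x ^ H) ^ 2 := by
    intro x hx
    rw [mul_comm, Real.rpow_mul hx, Real.rpow_two]
  rw [phi, abs_of_nonneg hs, e1 u hu, e1 v hv, e1 _ hs]
  ring

lemma phi_lb (H u v : ℝ) (hH0 : 0 < H) (hH1 : H < 1) (hv : 0 < v) (hvu : v < u)
    (hu2 : 1/2 ≤ u) :
    1/4 * (2 - 2 ^ H) * ((min v (u - v)) ^ H * ((u - v) ^ H * v ^ H)) ≤ phi H u v := by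
  set s := u - v with hs_def
  have hs : 0 < s := by simp [hs_def]; linarith
  have hc : (0:ℝ) < 2 - 2 ^ H := by
    have : (2:ℝ) ^ H < 2 ^ (1:ℝ) := Real.rpow_lt_rpow_of_exponent_lt (by norm_num) hH1
    rw [Real.rpow_one] at this; linarith
  have hm : 0 < min v s := lt_min hv hs
  -- factor bounds
  have hF1 : (2 - 2 ^ H) * (min v s) ^ H ≤ s ^ H + v ^ H - u ^ H := by
    have := aux_sub_min H v s hH0 hH1 hv hs
    have huvs : v + s = u := by simp [hs_def]
    rwa [huvs] at this
  have hF2 : s ^ H ≤ s ^ H + u ^ H - v ^ H := by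
    have : v ^ H ≤ u ^ H := Real.rpow_le_rpow hv.le hvu.le hH0.le
    linarith
  have huH : (1:ℝ)/2 ≤ u ^ H := by
    have h1 : ((1:ℝ)/2) ^ H ≤ u ^ H := Real.rpow_le_rpow (by norm_num) hu2 hH0.le
    have h2 : ((1:ℝ)/2) ^ (1:ℝ) ≤ ((1:ℝ)/2) ^ H :=
      Real.rpow_le_rpow_of_exponent_ge (by norm_num) (by norm_num) hH1.le
    rw [Real.rpow_one] at h2; linarith
  have hF3 : v ^ H ≤ (u ^ H + v ^ H) ^ 2 - (s ^ H) ^ 2 := by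
    have h1 : s ^ H ≤ u ^ H := Real.rpow_le_rpow hs.le (by linarith) hH0.le
    have hvH : 0 < v ^ H := Real.rpow_pos_of_pos hv H
    have hsH : 0 ≤ s ^ H := Real.rpow_nonneg hs.le H
    nlinarith
  rw [phi_eq H u v hv.le hvu.le]
  have hmH : 0 ≤ (min v s) ^ H := Real.rpow_nonneg hm.le H
  have hsH : 0 ≤ s ^ H := Real.rpow_nonneg hs.le H
  have hvH : 0 ≤ v ^ H := Real.rpow_nonneg hv.le H
  have hmul : (2 - 2 ^ H) * (min v s) ^ H * (s ^ H * v ^ H)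
      ≤ (s ^ H + v ^ H - u ^ H) * ((s ^ H + u ^ H - v ^ H) * ((u ^ H + v ^ H) ^ 2 - (s ^ H) ^ 2)) := by
    apply mul_le_mul hF1 _ (by positivity) (by linarith [mul_pos hc (Real.rpow_pos_of_pos hm H)] )
    exact mul_le_mul hF2 hF3 (by positivity) (by linarith)
  nlinarith [hmul]

lemma integrable_pow_mul (T α β : ℝ) (hT : 0 < T) (hα : -1 < α) (hα0 : α ≤ 0)
    (hβ : -1 < β) (hβ0 : β ≤ 0) :
    IntegrableOn (fun θ => θ ^ α * (T - θ) ^ β) (Ioo 0 T) volume := by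
  have h1 : IntegrableOn (fun θ => θ ^ α * (T - θ) ^ β) (Ioc 0 (T/2)) volume := by
    have hbase : IntegrableOn (fun θ : ℝ => (T/2) ^ β * θ ^ α) (Ioc 0 (T/2)) volume := by
      have := (intervalIntegral.intervalIntegrable_rpow' (a := 0) (b := T/2) hα)
      rw [intervalIntegrable_iff_integrableOn_Ioc_of_le (by linarith)] at this
      exact this.const_mul _
    have hcont : ContinuousOn (fun θ : ℝ => θ ^ α * (T - θ) ^ β) (Ioc 0 (T/2)) := by
      apply ContinuousOn.mul
      · exact continuousOn_id.rpow_const fun x hx => Or.inl (ne_of_gt hx.1)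
      · exact (continuousOn_const.sub continuousOn_id).rpow_const
          fun x hx => Or.inl (by have := hx.2; intro h; simp at h; linarith)
    apply Integrable.mono' hbase (hcont.aestronglyMeasurable measurableSet_Ioc)
    rw [ae_restrict_iff' measurableSet_Ioc]
    filter_upwards with θ hθ
    have hθ0 : 0 < θ := hθ.1
    have hTθ : 0 < T/2 := by linarith
    have h2 : (T - θ) ^ β ≤ (T/2) ^ β :=
      Real.rpow_le_rpow_of_nonpos hTθ (by linarith [hθ.2]) hβ0
    have hTθ2 : (0:ℝ) ≤ T - θ := by linarith [hθ.2]
    rw [Real.norm_eq_abs, abs_of_nonneg (by positivity)]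
    calc θ ^ α * (T - θ) ^ β ≤ θ ^ α * (T/2) ^ β :=
          mul_le_mul_of_nonneg_left h2 (by positivity)
      _ = (T/2) ^ β * θ ^ α := by ring
  have h2 : IntegrableOn (fun θ => θ ^ α * (T - θ) ^ β) (Ioo (T/2) T) volume := by
    have hbase : IntegrableOn (fun θ : ℝ => (T/2) ^ α * (T - θ) ^ β) (Ioo (T/2) T) volume := by
      have h0 := (intervalIntegral.intervalIntegrable_rpow' (a := 0) (b := T/2) hβ).comp_sub_left T
      replace h0 := h0.symm
      rw [sub_zero, sub_half] at h0
      rw [intervalIntegrable_iff_integrableOn_Ioc_of_le (by linarith)] at h0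
      exact ((h0.mono_set Ioo_subset_Ioc_self).const_mul _)
    have hcont : ContinuousOn (fun θ : ℝ => θ ^ α * (T - θ) ^ β) (Ioo (T/2) T) := by
      apply ContinuousOn.mul
      · exact continuousOn_id.rpow_const fun x hx => Or.inl (by have h1 := hx.1; simp only [id]; intro h; rw [h] at h1; linarith)
      · exact (continuousOn_const.sub continuousOn_id).rpow_const
          fun x hx => Or.inl (by have := hx.2; intro h; simp at h; linarith)
    apply Integrable.mono' hbase (hcont.aestronglyMeasurable measurableSet_Ioo)
    rw [ae_restrict_iff' measurableSet_Ioo]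
    filter_upwards with θ hθ
    have hθ0 : 0 < θ := by linarith [hθ.1, hT]
    have hTθ : 0 < T - θ := by linarith [hθ.2]
    have h2 : θ ^ α ≤ (T/2) ^ α :=
      Real.rpow_le_rpow_of_nonpos (by linarith) hθ.1.le hα0
    rw [Real.norm_eq_abs, abs_of_nonneg (by positivity)]
    exact mul_le_mul_of_nonneg_right h2 (by positivity)
  have h := h1.union h2
  apply h.mono_set
  intro x hx
  rcases le_or_gt x (T/2) with h' | h'
  · exact Or.inl ⟨hx.1, h'⟩
  · exact Or.inr ⟨h', hx.2⟩

set_option maxHeartbeats 1000000 in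
/-- For `H ∈ (0,1)` and `0 < ε < 1/(2H)`,
`∫₀^{π/4} φ_H(cos θ, sin θ)^{ε - 1/(2H)} dθ < ∞`. -/
theorem angular_integral_finite (H ε : ℝ) (hH : H ∈ Ioo (0:ℝ) 1)
    (hε0 : 0 < ε) (hε : ε < 1 / (2 * H)) :
    (∫⁻ θ in Ioo (0:ℝ) (π / 4),
        ENNReal.ofReal ((phi H (Real.cos θ) (Real.sin θ)) ^ (ε - 1 / (2 * H)))) < ⊤ := by
  obtain ⟨hH0, hH1⟩ := hH
  set p : ℝ := ε - 1 / (2 * H) with hp_def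
  have hp0 : p < 0 := by rw [hp_def]; linarith
  have hHε1 : H * ε < 1/2 := by
    have h := (mul_lt_mul_of_pos_left hε hH0)
    calc H * ε < H * (1 / (2*H)) := h
      _ = 1/2 := by field_simp
  have hHε0 : 0 < H * ε := mul_pos hH0 hε0
  set e : ℝ := H * p with he_def
  have he : e = H * ε - 1/2 := by rw [he_def, hp_def]; field_simp
  have he0 : e < 0 := by rw [he]; linarith
  have he2 : -1 < e := by rw [he]; linarith
  have he1 : -1 < 2*e := by rw [he]; linarith
  have hπ := Real.pi_pos
  set T : ℝ := π/4 with hT_def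
  have hT : 0 < T := by rw [hT_def]; positivity
  set k : ℝ := 2/π with hk_def
  have hk : 0 < k := by rw [hk_def]; positivity
  have hc : (0:ℝ) < 2 - 2 ^ H := by
    have : (2:ℝ) ^ H < 2 ^ (1:ℝ) := Real.rpow_lt_rpow_of_exponent_lt (by norm_num) hH1
    rw [Real.rpow_one] at this; linarith
  set c : ℝ := 1/4 * (2 - 2 ^ H) with hc_def
  have hcpos : 0 < c := by rw [hc_def]; linarith
  set Cg : ℝ := c ^ p * k ^ (3*e) with hCg_def
  set g : ℝ → ℝ := fun θ => Cg * (θ ^ (2*e) * (T-θ) ^ e + θ ^ e * (T-θ) ^ (2*e)) with hg_def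
  have hgint : IntegrableOn g (Ioo 0 T) volume := by
    have h1 := integrable_pow_mul T (2*e) e hT he1 (by linarith) he2 he0.le
    have h2 := integrable_pow_mul T e (2*e) hT he2 he0.le he1 (by linarith)
    exact (h1.add h2).const_mul Cg
  have hsqrt2 : Real.sqrt 2 ≤ 2 := by
    nlinarith [Real.sq_sqrt (by norm_num : (0:ℝ) ≤ 2), Real.sqrt_nonneg 2]
  have hsqrt1 : (1:ℝ) ≤ Real.sqrt 2 := by
    nlinarith [Real.sq_sqrt (by norm_num : (0:ℝ) ≤ 2), Real.sqrt_nonneg 2]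
  have key : ∀ θ ∈ Ioo (0:ℝ) T,
      ENNReal.ofReal ((phi H (Real.cos θ) (Real.sin θ)) ^ p) ≤ ENNReal.ofReal (g θ) := by
    intro θ hθ
    apply ENNReal.ofReal_le_ofReal
    obtain ⟨hθ0, hθT⟩ := hθ
    have hθπ : θ < π/2 := by rw [hT_def] at hθT; linarith
    have hv : 0 < Real.sin θ := Real.sin_pos_of_pos_of_lt_pi hθ0 (by linarith)
    have hu2 : 1/2 ≤ Real.cos θ := by
      have h1 : Real.cos (π/4) ≤ Real.cos θ :=
        Real.cos_le_cos_of_nonneg_of_le_pi hθ0.le (by linarith) (by rw [hT_def] at hθT; linarith)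
      rw [Real.cos_pi_div_four] at h1
      linarith
    have hsinsub : Real.sin (T - θ) = Real.sqrt 2 / 2 * (Real.cos θ - Real.sin θ) := by
      rw [hT_def, Real.sin_sub, Real.sin_pi_div_four, Real.cos_pi_div_four]; ring
    have hsinTθ : 0 < Real.sin (T - θ) :=
      Real.sin_pos_of_pos_of_lt_pi (by linarith) (by rw [hT_def]; linarith)
    have hs : 0 < Real.cos θ - Real.sin θ := by
      have hh2 : 0 < Real.sqrt 2 / 2 * (Real.cos θ - Real.sin θ) := hsinsub ▸ hsinTθ
      nlinarith [mul_pos hh2 (show (0:ℝ) < Real.sqrt 2 by positivity),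
        Real.sq_sqrt (show (0:ℝ) ≤ 2 by norm_num)]
    have hvu : Real.sin θ < Real.cos θ := by linarith
    have hsin_lb : k * θ ≤ Real.sin θ := Real.mul_le_sin hθ0.le hθπ.le
    have hs_lb : k * (T - θ) ≤ Real.cos θ - Real.sin θ := by
      have h1 : k * (T - θ) ≤ Real.sin (T - θ) :=
        Real.mul_le_sin (by linarith) (by rw [hT_def]; linarith)
      have h2 : Real.sin (T - θ) ≤ Real.cos θ - Real.sin θ := by
        rw [hsinsub]
        have h3 := mul_nonneg (show (0:ℝ) ≤ 1 - Real.sqrt 2 / 2 by linarith) hs.le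
        nlinarith [h3]
      linarith
    -- lower bound for phi
    set v : ℝ := Real.sin θ
    set u : ℝ := Real.cos θ
    set s : ℝ := u - v with hs_def
    set m : ℝ := min v s with hm_def
    have hm : 0 < m := lt_min hv hs
    have hphi := phi_lb H u v hH0 hH1 hv hvu hu2
    have hX : (0:ℝ) < c * (m ^ H * (s ^ H * v ^ H)) := by
      have := Real.rpow_pos_of_pos hm H
      have := Real.rpow_pos_of_pos hs H
      have := Real.rpow_pos_of_pos hv H
      positivity
    have h1 : phi H u v ^ p ≤ (c * (m ^ H * (s ^ H * v ^ H))) ^ p :=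
      Real.rpow_le_rpow_of_nonpos hX hphi hp0.le
    have h2 : (c * (m ^ H * (s ^ H * v ^ H))) ^ p
        = c ^ p * ((m ^ H) ^ p * ((s ^ H) ^ p * (v ^ H) ^ p)) := by
      rw [Real.mul_rpow hcpos.le (by positivity), Real.mul_rpow (by positivity) (by positivity),
        Real.mul_rpow (by positivity) (by positivity),
        Real.mul_rpow (Real.rpow_nonneg hs.le H) (Real.rpow_nonneg hv.le H)]
    set A : ℝ := ((k * θ) ^ H) ^ p with hA_def
    set B : ℝ := ((k * (T - θ)) ^ H) ^ p with hB_def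
    have hkθ : 0 < k * θ := by positivity
    have hTθpos : 0 < T - θ := by linarith
    have hkTθ : 0 < k * (T - θ) := by positivity
    have hApos : 0 < A := Real.rpow_pos_of_pos (Real.rpow_pos_of_pos hkθ H) p
    have hBpos : 0 < B := Real.rpow_pos_of_pos (Real.rpow_pos_of_pos hkTθ H) p
    have h4 : (v ^ H) ^ p ≤ A :=
      Real.rpow_le_rpow_of_nonpos (Real.rpow_pos_of_pos hkθ H)
        (Real.rpow_le_rpow hkθ.le hsin_lb hH0.le) hp0.le
    have h5 : (s ^ H) ^ p ≤ B :=
      Real.rpow_le_rpow_of_nonpos (Real.rpow_pos_of_pos hkTθ H)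
        (Real.rpow_le_rpow hkTθ.le hs_lb hH0.le) hp0.le
    have h3 : (m ^ H) ^ p ≤ (v ^ H) ^ p + (s ^ H) ^ p := by
      rcases min_choice v s with h | h
      · rw [hm_def, h]
        have : (0:ℝ) ≤ (s ^ H) ^ p := by positivity
        linarith
      · rw [hm_def, h]
        have : (0:ℝ) ≤ (v ^ H) ^ p := by positivity
        linarith
    have hvHp : (0:ℝ) ≤ (v ^ H) ^ p := by positivity
    have hsHp : (0:ℝ) ≤ (s ^ H) ^ p := by positivity
    have hstep : (m ^ H) ^ p * ((s ^ H) ^ p * (v ^ H) ^ p) ≤ (A + B) * (B * A) := by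
      apply mul_le_mul (h3.trans (add_le_add h4 h5))
        (mul_le_mul h5 h4 hvHp hBpos.le) (by positivity) (by positivity)
    have hcppos : (0:ℝ) < c ^ p := Real.rpow_pos_of_pos hcpos p
    have hfinal : phi H u v ^ p ≤ c ^ p * ((A + B) * (B * A)) := by
      rw [h2] at h1
      exact h1.trans (mul_le_mul_of_nonneg_left hstep hcppos.le)
    -- identify RHS with g θ
    have hA' : A = k ^ e * θ ^ e := by
      rw [hA_def, ← Real.rpow_mul hkθ.le, ← he_def, Real.mul_rpow hk.le hθ0.le]
    have hB' : B = k ^ e * (T - θ) ^ e := by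
      rw [hB_def, ← Real.rpow_mul hkTθ.le, ← he_def, Real.mul_rpow hk.le (by linarith)]
    have hgθ : c ^ p * ((A + B) * (B * A)) = g θ := by
      rw [hg_def]
      simp only
      rw [hCg_def, hA', hB']
      rw [show (3:ℝ)*e = e+e+e by ring, Real.rpow_add hk, Real.rpow_add hk,
        show (2:ℝ)*e = e+e by ring, Real.rpow_add hθ0,
        Real.rpow_add (show (0:ℝ) < T - θ by linarith)]
      ring
    rw [← hgθ]
    exact hfinal
  calc (∫⁻ θ in Ioo (0:ℝ) T, ENNReal.ofReal ((phi H (Real.cos θ) (Real.sin θ)) ^ p))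
      ≤ ∫⁻ θ in Ioo (0:ℝ) T, ENNReal.ofReal (g θ) :=
        setLIntegral_mono' measurableSet_Ioo key
    _ < ⊤ := hgint.setLIntegral_lt_top
end

section
/- Let T > 0, let d ≥ 1 be an integer, and let H1 = (H_{1,1},...,H_{1,d}), H2 = (H_{2,1},...,H_{2,d}) ∈ (0,1)^d with H̄1 = max_j H_{1,j}, H̄2 = max_j H_{2,j}. If d < 1/H̄1 + 1/H̄2, then the fourfold integral ∫₀^T dt ∫₀^T dt' ∫₀^T ds ∫₀^T ds' ∏_{j=1}^d [ (t^{2H_{1,j}} + s^{2H_{2,j}})·(t'^{2H_{1,j}} + s'^{2H_{2,j}}) − (1/4)·( t^{2H_{1,j}} + t'^{2H_{1,j}} − |t − t'|^{2H_{1,j}} + s^{2H_{2,j}} + s'^{2H_{2,j}} − |s − s'|^{2H_{2,j}} )² ]^{−1/2} is finite. (This quantity equals (2π)^d times the squared L² norm of the intersection local time of two independent d-dimensional fractional Brownian motions with Hurst multiparameters H1 and H2 on [0,T].) -/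
open MeasureTheory Set
open Real

-- tangent-type Bernoulli: (a+b)^H ≤ a^H + H * b^H for 0 ≤ b ≤ a, H ∈ [0,1]
lemma add_rpow_le_tangent {H a b : ℝ} (hH0 : 0 ≤ H) (hH1 : H ≤ 1)
    (hb : 0 ≤ b) (hba : b ≤ a) : (a + b) ^ H ≤ a ^ H + H * b ^ H := by
  rcases eq_or_lt_of_le (hb.trans hba) with ha | ha
  · -- a = 0, so b = 0
    have hb0 : b = 0 := le_antisymm (hba.trans ha.symm.le) hb
    subst hb0
    simp only [← ha, add_zero]
    nlinarith [Real.rpow_nonneg (le_refl (0:ℝ)) H]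
  · have hx : (0:ℝ) ≤ b / a := div_nonneg hb ha.le
    have hber : (1 + b / a) ^ H ≤ 1 + H * (b / a) :=
      rpow_one_add_le_one_add_mul_self (by linarith) hH0 hH1
    have hfact : (a + b) ^ H = a ^ H * (1 + b / a) ^ H := by
      rw [← Real.mul_rpow ha.le (by linarith)]
      rw [mul_add, mul_one, mul_div_cancel₀ _ ha.ne']
    have hkey : b * a ^ H / a ≤ b ^ H := by
      rcases eq_or_lt_of_le hb with hb0 | hb0
      · rw [← hb0]; simp [Real.rpow_nonneg]
      · have h1 : b * a ^ H / a = b ^ H * ((b / a) ^ (1 - H)) := by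
          have hbH := (Real.rpow_pos_of_pos hb0 H).ne'
          have haH := (Real.rpow_pos_of_pos ha H).ne'
          rw [Real.div_rpow hb ha.le, Real.rpow_sub hb0, Real.rpow_sub ha, Real.rpow_one]
          field_simp
          simp only [Real.rpow_one]
        rw [h1]
        have h2 : (b / a) ^ (1 - H) ≤ 1 :=
          Real.rpow_le_one hx (by rwa [div_le_one ha]) (by linarith)
        nlinarith [Real.rpow_nonneg hb H]
    calc (a + b) ^ H = a ^ H * (1 + b / a) ^ H := hfact
      _ ≤ a ^ H * (1 + H * (b / a)) := by
          apply mul_le_mul_of_nonneg_left hber (Real.rpow_nonneg ha.le H)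
      _ = a ^ H + H * (b * a ^ H / a) := by ring
      _ ≤ a ^ H + H * b ^ H := by nlinarith


lemma rpow_two_mul {a : ℝ} (ha : 0 ≤ a) (H : ℝ) : a ^ (2 * H) = (a ^ H) ^ 2 := by
  rw [show (2:ℝ) * H = H * ((2:ℕ):ℝ) by push_cast; ring, Real.rpow_mul_natCast ha]

/-- one-dimensional two-point determinant lower bound for fBm covariance -/
lemma oneDim {H s t : ℝ} (hH0 : 0 < H) (hH1 : H < 1) (hs : 0 ≤ s) (hst : s ≤ t) :
    (1 - H) / 4 * ((s * (t - s)) ^ (2 * H)) ≤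
      s ^ (2 * H) * t ^ (2 * H) - (1 / 2 * (s ^ (2 * H) + t ^ (2 * H) - (t - s) ^ (2 * H))) ^ 2 := by
  have hu : (0:ℝ) ≤ t - s := by linarith
  have ht : (0:ℝ) ≤ t := hs.trans hst
  set Y := s ^ H with hY
  set U := (t - s) ^ H with hU
  set TH := t ^ H with hTH
  have hYn : 0 ≤ Y := Real.rpow_nonneg hs H
  have hUn : 0 ≤ U := Real.rpow_nonneg hu H
  have hTHn : 0 ≤ TH := Real.rpow_nonneg ht H
  have hYT : Y ≤ TH := Real.rpow_le_rpow hs hst hH0.le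
  have hUT : U ≤ TH := Real.rpow_le_rpow hu (by linarith) hH0.le
  have hmul : (s * (t - s)) ^ (2 * H) = Y ^ 2 * U ^ 2 := by
    rw [Real.mul_rpow hs hu, rpow_two_mul hs, rpow_two_mul hu]
  rw [hmul, rpow_two_mul hs, rpow_two_mul hu, rpow_two_mul ht]
  -- key: Y + U - TH ≥ (1-H) * min Y U
  have hkey : (1 - H) * min Y U ≤ Y + U - TH := by
    rcases le_total s (t - s) with hc | hc
    · have h1 : TH ≤ U + H * Y := by
        have := add_rpow_le_tangent hH0.le hH1.le hs hc
        rwa [show t - s + s = t by ring] at this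
      have hminY : min Y U = Y := min_eq_left (Real.rpow_le_rpow hs hc hH0.le)
      rw [hminY]; nlinarith
    · have h1 : TH ≤ Y + H * U := by
        have := add_rpow_le_tangent hH0.le hH1.le hu hc
        rwa [show s + (t - s) = t by ring] at this
      have hminU : min Y U = U := min_eq_right (Real.rpow_le_rpow hu hc hH0.le)
      rw [hminU]; nlinarith
  have hsub : TH ≤ Y + U := by
    have h0 : 0 ≤ (1 - H) * min Y U := mul_nonneg (by linarith) (le_min hYn hUn)
    linarith
  -- now the product bounds, casing on min
  rcases le_total Y U with hc | hc
  · have hmin : min Y U = Y := min_eq_left hc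
    rw [hmin] at hkey
    have hP1 : (1 - H) * Y * U ≤ (Y + U - TH) * (U + TH - Y) := by
      apply mul_le_mul (by linarith) (by linarith) hUn (by nlinarith)
    have hP2 : Y * U ≤ (TH + Y - U) * (TH + Y + U) := by
      apply mul_le_mul (by linarith) (by linarith) hUn (by linarith)
    have h := mul_le_mul hP1 hP2 (by positivity) (by nlinarith)
    have hid : Y^2*TH^2 - (1/2*(Y^2+TH^2-U^2))^2
        = 1/4*((Y+U-TH)*(U+TH-Y)*((TH+Y-U)*(TH+Y+U))) := by ring
    linarith
  · have hmin : min Y U = U := min_eq_right hc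
    rw [hmin] at hkey
    have hP1 : (1 - H) * U * U ≤ (Y + U - TH) * (U + TH - Y) := by
      apply mul_le_mul (by linarith) (by linarith) hUn (by nlinarith)
    have hP2 : Y * Y ≤ (TH + Y - U) * (TH + Y + U) := by
      apply mul_le_mul (by linarith) (by linarith) hYn (by linarith)
    have h := mul_le_mul hP1 hP2 (by positivity) (by nlinarith)
    have hid : Y^2*TH^2 - (1/2*(Y^2+TH^2-U^2))^2
        = 1/4*((Y+U-TH)*(U+TH-Y)*((TH+Y-U)*(TH+Y+U))) := by ring
    linarith


open intervalIntegral in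
lemma my_integral_rpow {a b r : ℝ} (h : -1 < r) :
    ∫ x in a..b, x ^ r = (b ^ (r + 1) - a ^ (r + 1)) / (r + 1) :=
  integral_rpow (Or.inl h)
open intervalIntegral in
lemma my_intervalIntegrable_rpow' {a b r : ℝ} (h : -1 < r) :
    IntervalIntegrable (fun x => x ^ r) volume a b :=
  intervalIntegrable_rpow' h

/-- integral of (x-c)^e on Icc c d -/
lemma lint_shift {c d e : ℝ} (he : -1 < e) (hcd : c ≤ d) :
    ∫⁻ x in Icc c d, ENNReal.ofReal ((x - c) ^ e) ≤ ENNReal.ofReal ((d - c) ^ (e + 1) / (e + 1)) := by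
  have hInt : IntervalIntegrable (fun x => (x - c) ^ e) volume c d := by
    simpa using (my_intervalIntegrable_rpow' (a := 0) (b := d - c) he).comp_sub_right c
  have hIoc : IntegrableOn (fun x => (x - c) ^ e) (Ioc c d) volume := by
    rw [← intervalIntegrable_iff_integrableOn_Ioc_of_le hcd]; exact hInt
  have hres : volume.restrict (Icc c d) = volume.restrict (Ioc c d) :=
    (Measure.restrict_congr_set Ioc_ae_eq_Icc).symm
  rw [hres]
  have hnn : 0 ≤ᵐ[volume.restrict (Ioc c d)] fun x => (x - c) ^ e := by
    filter_upwards [ae_restrict_mem measurableSet_Ioc] with x hx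
    exact Real.rpow_nonneg (by linarith [hx.1]) e
  rw [← ofReal_integral_eq_lintegral_ofReal hIoc hnn]
  apply ENNReal.ofReal_le_ofReal
  rw [← intervalIntegral.integral_of_le hcd]
  rw [intervalIntegral.integral_comp_sub_right (fun x => x ^ e) c]
  rw [my_integral_rpow he]
  rw [sub_self, Real.zero_rpow (by linarith : e + 1 ≠ 0)]
  simp

/-- integral of (d-x)^e on Icc c d -/
lemma lint_shift' {c d e : ℝ} (he : -1 < e) (hcd : c ≤ d) :
    ∫⁻ x in Icc c d, ENNReal.ofReal ((d - x) ^ e) ≤ ENNReal.ofReal ((d - c) ^ (e + 1) / (e + 1)) := by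
  have hInt : IntervalIntegrable (fun x => (d - x) ^ e) volume c d := by
    simpa using ((my_intervalIntegrable_rpow' (a := d - d) (b := d - c) he).comp_sub_left d).symm
  have hIoc : IntegrableOn (fun x => (d - x) ^ e) (Ioc c d) volume := by
    rw [← intervalIntegrable_iff_integrableOn_Ioc_of_le hcd]; exact hInt
  have hres : volume.restrict (Icc c d) = volume.restrict (Ioc c d) :=
    (Measure.restrict_congr_set Ioc_ae_eq_Icc).symm
  rw [hres]
  have hnn : 0 ≤ᵐ[volume.restrict (Ioc c d)] fun x => (d - x) ^ e := by
    filter_upwards [ae_restrict_mem measurableSet_Ioc] with x hx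
    exact Real.rpow_nonneg (by linarith [hx.2]) e
  rw [← ofReal_integral_eq_lintegral_ofReal hIoc hnn]
  apply ENNReal.ofReal_le_ofReal
  rw [← intervalIntegral.integral_of_le hcd]
  rw [intervalIntegral.integral_comp_sub_left (fun x => x ^ e) d]
  rw [my_integral_rpow he]
  rw [sub_self, Real.zero_rpow (by linarith : e + 1 ≠ 0)]
  simp


lemma oneDim' {H t t' : ℝ} (hH0 : 0 < H) (hH1 : H < 1) (ht : 0 ≤ t) (ht' : 0 ≤ t') :
    (1 - H) / 4 * ((min t t' * |t - t'|) ^ (2 * H)) ≤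
      t ^ (2 * H) * t' ^ (2 * H) -
        (1 / 2 * (t ^ (2 * H) + t' ^ (2 * H) - |t - t'| ^ (2 * H))) ^ 2 := by
  rcases le_total t' t with hc | hc
  · have h := oneDim hH0 hH1 ht' hc
    rw [min_eq_right hc, abs_of_nonneg (by linarith : (0:ℝ) ≤ t - t')]
    nlinarith [h]
  · have h := oneDim hH0 hH1 ht hc
    rw [min_eq_left hc, abs_of_nonpos (by linarith : t - t' ≤ 0), show -(t - t') = t' - t by ring]
    nlinarith [h]


lemma decomp {a1 a2 b1 b2 C1 C2 : ℝ} (ha1 : 0 ≤ a1) (ha2 : 0 ≤ a2) (hb1 : 0 ≤ b1) (hb2 : 0 ≤ b2)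
    (h1 : C1 ^ 2 ≤ a1 * b1) (h2 : C2 ^ 2 ≤ a2 * b2) :
    a1 * b1 - C1 ^ 2 + (a2 * b2 - C2 ^ 2) ≤ (a1 + a2) * (b1 + b2) - (C1 + C2) ^ 2 := by
  have h3 : (C1 * C2) ^ 2 ≤ a1 * b2 * (a2 * b1) := by
    nlinarith [mul_le_mul h1 h2 (sq_nonneg C2) (mul_nonneg ha1 hb1)]
  have h4 : 2 * (C1 * C2) ≤ a1 * b2 + a2 * b1 := by
    nlinarith [h3, sq_nonneg (a1 * b2 - a2 * b1), mul_nonneg ha1 hb2, mul_nonneg ha2 hb1]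
  nlinarith [h4]


set_option maxHeartbeats 1000000 in
lemma factor_bound {h1 h2 α β t t' s s' : ℝ}
    (hh1 : h1 ∈ Ioo (0:ℝ) 1) (hh2 : h2 ∈ Ioo (0:ℝ) 1)
    (hα : 0 < α) (hβ : 0 < β) (hαβ : α + β = 1)
    (ht : 0 < t) (ht' : 0 < t') (hs : 0 < s) (hs' : 0 < s')
    (htt : t ≠ t') (hss : s ≠ s') :
    0 < (t ^ (2 * h1) + s ^ (2 * h2)) * (t' ^ (2 * h1) + s' ^ (2 * h2)) -
        1/4 * (t ^ (2 * h1) + t' ^ (2 * h1) - |t - t'| ^ (2 * h1) +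
                s ^ (2 * h2) + s' ^ (2 * h2) - |s - s'| ^ (2 * h2)) ^ 2 ∧
    ((t ^ (2 * h1) + s ^ (2 * h2)) * (t' ^ (2 * h1) + s' ^ (2 * h2)) -
        1/4 * (t ^ (2 * h1) + t' ^ (2 * h1) - |t - t'| ^ (2 * h1) +
                s ^ (2 * h2) + s' ^ (2 * h2) - |s - s'| ^ (2 * h2)) ^ 2) ^ (-(1:ℝ)/2) ≤
      (min (1 - h1) (1 - h2) / 4) ^ (-(1:ℝ)/2) *
        (min t t' * |t - t'|) ^ (-(α * h1)) * (min s s' * |s - s'|) ^ (-(β * h2)) := by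
  obtain ⟨hh1a, hh1b⟩ := hh1
  obtain ⟨hh2a, hh2b⟩ := hh2
  have hm1 : 0 < min t t' * |t - t'| :=
    mul_pos (lt_min ht ht') (abs_pos.mpr (sub_ne_zero.mpr htt))
  have hm2 : 0 < min s s' * |s - s'| :=
    mul_pos (lt_min hs hs') (abs_pos.mpr (sub_ne_zero.mpr hss))
  have hc : 0 < min (1 - h1) (1 - h2) / 4 := by
    have : 0 < min (1 - h1) (1 - h2) := lt_min (by linarith) (by linarith)
    positivity
  set m1 := min t t' * |t - t'| with hm1def
  set m2 := min s s' * |s - s'| with hm2def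
  set c := min (1 - h1) (1 - h2) / 4 with hcdef
  set A := m1 ^ (2 * h1) with hAdef
  set B := m2 ^ (2 * h2) with hBdef
  have hA : 0 < A := Real.rpow_pos_of_pos hm1 _
  have hB : 0 < B := Real.rpow_pos_of_pos hm2 _
  have d1 := oneDim' hh1a hh1b ht.le ht'.le
  have d2 := oneDim' hh2a hh2b hs.le hs'.le
  have hC1 : (1/2 * (t ^ (2*h1) + t' ^ (2*h1) - |t - t'| ^ (2*h1))) ^ 2 ≤
      t ^ (2*h1) * t' ^ (2*h1) := by
    nlinarith [mul_nonneg (by linarith : (0:ℝ) ≤ (1-h1)/4) hA.le]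
  have hC2 : (1/2 * (s ^ (2*h2) + s' ^ (2*h2) - |s - s'| ^ (2*h2))) ^ 2 ≤
      s ^ (2*h2) * s' ^ (2*h2) := by
    nlinarith [mul_nonneg (by linarith : (0:ℝ) ≤ (1-h2)/4) hB.le]
  have hdec := decomp (Real.rpow_nonneg ht.le (2*h1)) (Real.rpow_nonneg hs.le (2*h2))
      (Real.rpow_nonneg ht'.le (2*h1)) (Real.rpow_nonneg hs'.le (2*h2)) hC1 hC2
  have hcA : c * A ≤ (1 - h1)/4 * A :=
    mul_le_mul_of_nonneg_right (by rw [hcdef]; linarith [min_le_left (1-h1) (1-h2)]) hA.le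
  have hcB : c * B ≤ (1 - h2)/4 * B :=
    mul_le_mul_of_nonneg_right (by rw [hcdef]; linarith [min_le_right (1-h1) (1-h2)]) hB.le
  set F := (t ^ (2 * h1) + s ^ (2 * h2)) * (t' ^ (2 * h1) + s' ^ (2 * h2)) -
      1/4 * (t ^ (2 * h1) + t' ^ (2 * h1) - |t - t'| ^ (2 * h1) +
              s ^ (2 * h2) + s' ^ (2 * h2) - |s - s'| ^ (2 * h2)) ^ 2 with hFdef
  have hring : F = (t ^ (2*h1) + s ^ (2*h2)) * (t' ^ (2*h1) + s' ^ (2*h2)) -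
      ((1/2 * (t ^ (2*h1) + t' ^ (2*h1) - |t - t'| ^ (2*h1))) +
       (1/2 * (s ^ (2*h2) + s' ^ (2*h2) - |s - s'| ^ (2*h2)))) ^ 2 := by
    rw [hFdef]; ring
  have hF : c * (A + B) ≤ F := by rw [hring]; linarith [hdec, d1, d2, hcA, hcB]
  have hamgm : A ^ α * B ^ β ≤ A + B := by
    have h := Real.geom_mean_le_arith_mean2_weighted hα.le hβ.le hA.le hB.le hαβ
    nlinarith [mul_nonneg hα.le hA.le, mul_nonneg hβ.le hB.le,
      mul_le_mul_of_nonneg_right (show α ≤ 1 by linarith) hA.le,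
      mul_le_mul_of_nonneg_right (show β ≤ 1 by linarith) hB.le]
  have hpos : 0 < c * (A ^ α * B ^ β) := by positivity
  have h5 : c * (A ^ α * B ^ β) ≤ F :=
    le_trans (mul_le_mul_of_nonneg_left hamgm hc.le) hF
  have h6 : F ^ (-(1:ℝ)/2) ≤ (c * (A ^ α * B ^ β)) ^ (-(1:ℝ)/2) :=
    Real.rpow_le_rpow_of_nonpos hpos h5 (by norm_num)
  refine ⟨lt_of_lt_of_le hpos h5, h6.trans (le_of_eq ?_)⟩
  rw [Real.mul_rpow hc.le (by positivity), Real.mul_rpow (by positivity) (by positivity),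
    hAdef, hBdef, ← Real.rpow_mul hm1.le, ← Real.rpow_mul hm1.le,
    ← Real.rpow_mul hm2.le, ← Real.rpow_mul hm2.le,
    show 2 * h1 * α * (-(1:ℝ)/2) = -(α * h1) by ring,
    show 2 * h2 * β * (-(1:ℝ)/2) = -(β * h2) by ring, mul_assoc]


lemma Jfin {T p : ℝ} (hT : 0 < T) (hp0 : 0 ≤ p) (hp1 : p < 1) :
    ∫⁻ t in Icc (0:ℝ) T, ∫⁻ t' in Icc (0:ℝ) T,
      ENNReal.ofReal ((min t t' * |t - t'|) ^ (-p)) < ⊤ := by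
  have h1p : (0:ℝ) < 1 - p := by linarith
  -- step 1 : inner bound for 0 < t ≤ T
  have inner_bd : ∀ t : ℝ, 0 < t → t ≤ T →
      (∫⁻ t' in Icc (0:ℝ) T, ENNReal.ofReal ((min t t' * |t - t'|) ^ (-p))) ≤
        ENNReal.ofReal ((2 * (1/2:ℝ) ^ (1 - 2*p) / (1 - p)) * t ^ (1 - 2*p)) +
        ENNReal.ofReal ((T ^ (1-p) / (1-p)) * t ^ (-p)) := by
    intro t ht htT
    have ht2 : 0 < t / 2 := by linarith
    have hsplit : Icc (0:ℝ) T ⊆ Icc 0 (t/2) ∪ (Icc (t/2) t ∪ Icc t T) := by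
      intro x hx
      rcases le_total x (t/2) with h | h
      · exact Or.inl ⟨hx.1, h⟩
      · rcases le_total x t with h' | h'
        · exact Or.inr (Or.inl ⟨h, h'⟩)
        · exact Or.inr (Or.inr ⟨h', hx.2⟩)
    calc (∫⁻ t' in Icc (0:ℝ) T, ENNReal.ofReal ((min t t' * |t - t'|) ^ (-p)))
        ≤ ∫⁻ t' in Icc 0 (t/2) ∪ (Icc (t/2) t ∪ Icc t T),
            ENNReal.ofReal ((min t t' * |t - t'|) ^ (-p)) := lintegral_mono_set hsplit
      _ ≤ (∫⁻ t' in Icc 0 (t/2), ENNReal.ofReal ((min t t' * |t - t'|) ^ (-p))) +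
          ((∫⁻ t' in Icc (t/2) t, ENNReal.ofReal ((min t t' * |t - t'|) ^ (-p))) +
           (∫⁻ t' in Icc t T, ENNReal.ofReal ((min t t' * |t - t'|) ^ (-p)))) := by
          refine (lintegral_union_le _ _ _).trans ?_
          exact add_le_add le_rfl (lintegral_union_le _ _ _)
      _ ≤ ENNReal.ofReal ((2 * (1/2:ℝ) ^ (1 - 2*p) / (1 - p)) * t ^ (1 - 2*p)) +
          ENNReal.ofReal ((T ^ (1-p) / (1-p)) * t ^ (-p)) := by
          have e1 : (∫⁻ t' in Icc 0 (t/2), ENNReal.ofReal ((min t t' * |t - t'|) ^ (-p))) ≤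
              ENNReal.ofReal ((t/2) ^ (-p)) * ENNReal.ofReal ((t/2) ^ (1-p) / (1-p)) := by
            have hb : ∀ᵐ t' ∂(volume.restrict (Icc 0 (t/2))),
                ENNReal.ofReal ((min t t' * |t - t'|) ^ (-p)) ≤
                  ENNReal.ofReal ((t/2) ^ (-p) * (t' - 0) ^ (-p)) := by
              filter_upwards [ae_restrict_mem measurableSet_Icc] with t' ht'
              apply ENNReal.ofReal_le_ofReal
              have h1 : min t t' = t' := min_eq_right (by linarith [ht'.2])
              have h2 : |t - t'| = t - t' := abs_of_nonneg (by linarith [ht'.2])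
              rw [h1, h2, Real.mul_rpow ht'.1 (by linarith [ht'.2]), sub_zero, mul_comm]
              apply mul_le_mul_of_nonneg_right _ (Real.rpow_nonneg ht'.1 _)
              exact Real.rpow_le_rpow_of_nonpos ht2 (by linarith [ht'.2]) (by linarith)
            calc _ ≤ ∫⁻ t' in Icc 0 (t/2),
                  ENNReal.ofReal ((t/2) ^ (-p) * (t' - 0) ^ (-p)) := lintegral_mono_ae hb
              _ = ENNReal.ofReal ((t/2) ^ (-p)) *
                  ∫⁻ t' in Icc 0 (t/2), ENNReal.ofReal ((t' - 0) ^ (-p)) := by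
                  rw [← lintegral_const_mul' _ _ ENNReal.ofReal_ne_top]
                  congr 1; funext t'
                  rw [← ENNReal.ofReal_mul (Real.rpow_nonneg ht2.le _)]
              _ ≤ _ := by
                  apply mul_le_mul_right
                  have := lint_shift (c := 0) (d := t/2) (e := -p) (by linarith) ht2.le
                  simpa [show -p + 1 = 1 - p by ring] using this
          have e2 : (∫⁻ t' in Icc (t/2) t, ENNReal.ofReal ((min t t' * |t - t'|) ^ (-p))) ≤
              ENNReal.ofReal ((t/2) ^ (-p)) * ENNReal.ofReal ((t/2) ^ (1-p) / (1-p)) := by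
            have hb : ∀ᵐ t' ∂(volume.restrict (Icc (t/2) t)),
                ENNReal.ofReal ((min t t' * |t - t'|) ^ (-p)) ≤
                  ENNReal.ofReal ((t/2) ^ (-p) * (t - t') ^ (-p)) := by
              filter_upwards [ae_restrict_mem measurableSet_Icc] with t' ht'
              apply ENNReal.ofReal_le_ofReal
              have h1 : min t t' = t' := min_eq_right (by linarith [ht'.2])
              have h2 : |t - t'| = t - t' := abs_of_nonneg (by linarith [ht'.2])
              rw [h1, h2, Real.mul_rpow (by linarith [ht'.1]) (by linarith [ht'.2])]
              apply mul_le_mul_of_nonneg_right _ (Real.rpow_nonneg (by linarith [ht'.2]) _)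
              exact Real.rpow_le_rpow_of_nonpos ht2 ht'.1 (by linarith)
            calc _ ≤ ∫⁻ t' in Icc (t/2) t,
                  ENNReal.ofReal ((t/2) ^ (-p) * (t - t') ^ (-p)) := lintegral_mono_ae hb
              _ = ENNReal.ofReal ((t/2) ^ (-p)) *
                  ∫⁻ t' in Icc (t/2) t, ENNReal.ofReal ((t - t') ^ (-p)) := by
                  rw [← lintegral_const_mul' _ _ ENNReal.ofReal_ne_top]
                  congr 1; funext t'
                  rw [← ENNReal.ofReal_mul (Real.rpow_nonneg ht2.le _)]
              _ ≤ _ := by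
                  apply mul_le_mul_right
                  have := lint_shift' (c := t/2) (d := t) (e := -p) (by linarith) (by linarith)
                  simpa [show t - t/2 = t/2 by ring, show -p + 1 = 1 - p by ring] using this
          have e3 : (∫⁻ t' in Icc t T, ENNReal.ofReal ((min t t' * |t - t'|) ^ (-p))) ≤
              ENNReal.ofReal (t ^ (-p)) * ENNReal.ofReal (T ^ (1-p) / (1-p)) := by
            have hb : ∀ᵐ t' ∂(volume.restrict (Icc t T)),
                ENNReal.ofReal ((min t t' * |t - t'|) ^ (-p)) ≤
                  ENNReal.ofReal (t ^ (-p) * (t' - t) ^ (-p)) := by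
              filter_upwards [ae_restrict_mem measurableSet_Icc] with t' ht'
              apply ENNReal.ofReal_le_ofReal
              have h1 : min t t' = t := min_eq_left ht'.1
              have h2 : |t - t'| = t' - t := by
                rw [abs_of_nonpos (by linarith [ht'.1])]; ring
              rw [h1, h2, Real.mul_rpow ht.le (by linarith [ht'.1])]
            calc _ ≤ ∫⁻ t' in Icc t T,
                  ENNReal.ofReal (t ^ (-p) * (t' - t) ^ (-p)) := lintegral_mono_ae hb
              _ = ENNReal.ofReal (t ^ (-p)) *
                  ∫⁻ t' in Icc t T, ENNReal.ofReal ((t' - t) ^ (-p)) := by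
                  rw [← lintegral_const_mul' _ _ ENNReal.ofReal_ne_top]
                  congr 1; funext t'
                  rw [← ENNReal.ofReal_mul (Real.rpow_nonneg ht.le _)]
              _ ≤ _ := by
                  apply mul_le_mul_right
                  refine (lint_shift (c := t) (d := T) (e := -p) (by linarith) htT).trans ?_
                  apply ENNReal.ofReal_le_ofReal
                  rw [show -p + 1 = 1 - p by ring]
                  gcongr <;> linarith
          -- combine the three pieces
          have hval : (t/2) ^ (-p) * ((t/2) ^ (1-p) / (1-p)) =
              (1/2:ℝ) ^ (1-2*p) * t ^ (1-2*p) / (1-p) := by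
            rw [← mul_div_assoc, ← Real.rpow_add ht2,
              show -p + (1 - p) = 1 - 2*p by ring,
              show t/2 = t * (1/2) by ring, Real.mul_rpow ht.le (by norm_num)]
            ring
          have hEA : ENNReal.ofReal ((t/2) ^ (-p)) * ENNReal.ofReal ((t/2) ^ (1-p) / (1-p)) =
              ENNReal.ofReal ((t/2) ^ (-p) * ((t/2) ^ (1-p) / (1-p))) :=
            (ENNReal.ofReal_mul (Real.rpow_nonneg ht2.le _)).symm
          have hEB : ENNReal.ofReal (t ^ (-p)) * ENNReal.ofReal (T ^ (1-p) / (1-p)) =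
              ENNReal.ofReal ((T ^ (1-p) / (1-p)) * t ^ (-p)) := by
            rw [← ENNReal.ofReal_mul (Real.rpow_nonneg ht.le _)]; rw [mul_comm]
          refine (add_le_add e1 (add_le_add e2 e3)).trans (le_of_eq ?_)
          rw [hEA, hEB, hval, ← add_assoc, ← ENNReal.ofReal_add (by positivity) (by positivity)]
          congr 2
          ring
  -- step 2 : outer integral
  have hae : ∀ᵐ t ∂(volume.restrict (Icc (0:ℝ) T)), t ≠ 0 := by
    apply ae_restrict_of_ae
    have h0 : volume ({(0:ℝ)} : Set ℝ) = 0 := Real.volume_singleton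
    have := measure_eq_zero_iff_ae_notMem.mp h0
    filter_upwards [this] with x hx
    simpa using hx
  have step2 : (∫⁻ t in Icc (0:ℝ) T, ∫⁻ t' in Icc (0:ℝ) T,
      ENNReal.ofReal ((min t t' * |t - t'|) ^ (-p))) ≤
      ∫⁻ t in Icc (0:ℝ) T, (ENNReal.ofReal ((2 * (1/2:ℝ) ^ (1 - 2*p) / (1 - p)) * t ^ (1 - 2*p)) +
        ENNReal.ofReal ((T ^ (1-p) / (1-p)) * t ^ (-p))) := by
    apply lintegral_mono_ae
    filter_upwards [ae_restrict_mem measurableSet_Icc, hae] with t htI ht0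
    exact inner_bd t (lt_of_le_of_ne htI.1 (Ne.symm ht0)) htI.2
  have hmeas1 : Measurable fun t : ℝ =>
      ENNReal.ofReal ((2 * (1/2:ℝ) ^ (1 - 2*p) / (1 - p)) * t ^ (1 - 2*p)) := by fun_prop
  have fin1 : (∫⁻ t in Icc (0:ℝ) T,
      ENNReal.ofReal ((2 * (1/2:ℝ) ^ (1 - 2*p) / (1 - p)) * t ^ (1 - 2*p))) < ⊤ := by
    have hk : (0:ℝ) ≤ 2 * (1/2:ℝ) ^ (1 - 2*p) / (1 - p) := by positivity
    calc (∫⁻ t in Icc (0:ℝ) T,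
        ENNReal.ofReal ((2 * (1/2:ℝ) ^ (1 - 2*p) / (1 - p)) * t ^ (1 - 2*p)))
        = ENNReal.ofReal (2 * (1/2:ℝ) ^ (1 - 2*p) / (1 - p)) *
          ∫⁻ t in Icc (0:ℝ) T, ENNReal.ofReal (t ^ (1 - 2*p)) := by
          rw [← lintegral_const_mul' _ _ ENNReal.ofReal_ne_top]
          congr 1; funext t; rw [← ENNReal.ofReal_mul hk]
      _ ≤ ENNReal.ofReal (2 * (1/2:ℝ) ^ (1 - 2*p) / (1 - p)) *
          ENNReal.ofReal (T ^ ((1-2*p) + 1) / ((1-2*p) + 1)) := by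
          apply mul_le_mul_right
          have := lint_shift (c := 0) (d := T) (e := 1-2*p) (by linarith) hT.le
          simpa using this
      _ < ⊤ := ENNReal.mul_lt_top ENNReal.ofReal_lt_top ENNReal.ofReal_lt_top
  have fin2 : (∫⁻ t in Icc (0:ℝ) T,
      ENNReal.ofReal ((T ^ (1-p) / (1-p)) * t ^ (-p))) < ⊤ := by
    have hk : (0:ℝ) ≤ T ^ (1-p) / (1-p) := by positivity
    calc (∫⁻ t in Icc (0:ℝ) T, ENNReal.ofReal ((T ^ (1-p) / (1-p)) * t ^ (-p)))
        = ENNReal.ofReal (T ^ (1-p) / (1-p)) *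
          ∫⁻ t in Icc (0:ℝ) T, ENNReal.ofReal (t ^ (-p)) := by
          rw [← lintegral_const_mul' _ _ ENNReal.ofReal_ne_top]
          congr 1; funext t; rw [← ENNReal.ofReal_mul hk]
      _ ≤ ENNReal.ofReal (T ^ (1-p) / (1-p)) *
          ENNReal.ofReal (T ^ (-p + 1) / (-p + 1)) := by
          apply mul_le_mul_right
          have := lint_shift (c := 0) (d := T) (e := -p) (by linarith) hT.le
          simpa using this
      _ < ⊤ := ENNReal.mul_lt_top ENNReal.ofReal_lt_top ENNReal.ofReal_lt_top
  calc (∫⁻ t in Icc (0:ℝ) T, ∫⁻ t' in Icc (0:ℝ) T,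
      ENNReal.ofReal ((min t t' * |t - t'|) ^ (-p))) ≤ _ := step2
    _ = (∫⁻ t in Icc (0:ℝ) T,
          ENNReal.ofReal ((2 * (1/2:ℝ) ^ (1 - 2*p) / (1 - p)) * t ^ (1 - 2*p))) +
        (∫⁻ t in Icc (0:ℝ) T, ENNReal.ofReal ((T ^ (1-p) / (1-p)) * t ^ (-p))) :=
      lintegral_add_left hmeas1 _
    _ < ⊤ := ENNReal.add_lt_top.mpr ⟨fin1, fin2⟩


noncomputable def intg (d : ℕ) (H1 H2 : Fin d → ℝ) (t t' s s' : ℝ) : ENNReal :=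
  ENNReal.ofReal (∏ j,
    ((t ^ (2 * H1 j) + s ^ (2 * H2 j)) * (t' ^ (2 * H1 j) + s' ^ (2 * H2 j)) -
        1/4 * (t ^ (2 * H1 j) + t' ^ (2 * H1 j) - |t - t'| ^ (2 * H1 j) +
                s ^ (2 * H2 j) + s' ^ (2 * H2 j) - |s - s'| ^ (2 * H2 j)) ^ 2) ^
      (-(1:ℝ)/2))

/-- For `T > 0`, `d ≥ 1` and Hurst multiparameters `H1, H2 ∈ (0,1)^d` with
`d < 1/H̄1 + 1/H̄2`, the fourfold integral
`∫₀^T dt ∫₀^T dt' ∫₀^T ds ∫₀^T ds' ∏ⱼ [ (t^{2H_{1,j}} + s^{2H_{2,j}})(t'^{2H_{1,j}} + s'^{2H_{2,j}})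
  - (1/4)(t^{2H_{1,j}} + t'^{2H_{1,j}} - |t-t'|^{2H_{1,j}} + s^{2H_{2,j}} + s'^{2H_{2,j}}
  - |s-s'|^{2H_{2,j}})² ]^{-1/2}` is finite. -/
theorem local_time_L2_norm_finite (T : ℝ) (hT : 0 < T) (d : ℕ) (hd : 1 ≤ d)
    (H1 H2 : Fin d → ℝ)
    (h1 : ∀ j, H1 j ∈ Ioo (0:ℝ) 1) (h2 : ∀ j, H2 j ∈ Ioo (0:ℝ) 1)
    (HB1 HB2 : ℝ)
    (hB1 : IsGreatest (Set.range H1) HB1) (hB2 : IsGreatest (Set.range H2) HB2)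
    (hcond : (d : ℝ) < 1 / HB1 + 1 / HB2) :
    (∫⁻ t in Icc (0:ℝ) T, ∫⁻ t' in Icc (0:ℝ) T, ∫⁻ s in Icc (0:ℝ) T, ∫⁻ s' in Icc (0:ℝ) T,
        ENNReal.ofReal (∏ j,
          ((t ^ (2 * H1 j) + s ^ (2 * H2 j)) * (t' ^ (2 * H1 j) + s' ^ (2 * H2 j)) -
              1/4 * (t ^ (2 * H1 j) + t' ^ (2 * H1 j) - |t - t'| ^ (2 * H1 j) +
                      s ^ (2 * H2 j) + s' ^ (2 * H2 j) - |s - s'| ^ (2 * H2 j)) ^ 2) ^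
            (-(1:ℝ)/2))) < ⊤ := by
  -- basic facts about the Hurst parameters
  have hne : Nonempty (Fin d) := Fin.pos_iff_nonempty.mp (by omega)
  obtain ⟨⟨j1, hj1⟩, hub1⟩ := hB1
  obtain ⟨⟨j2, hj2⟩, hub2⟩ := hB2
  have hHB1 : 0 < HB1 := hj1 ▸ (h1 j1).1
  have hHB2 : 0 < HB2 := hj2 ▸ (h2 j2).1
  set S1 := ∑ j, H1 j with hS1def
  set S2 := ∑ j, H2 j with hS2def
  have hS1pos : 0 < S1 := Finset.sum_pos (fun j _ => (h1 j).1) Finset.univ_nonempty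
  have hS2pos : 0 < S2 := Finset.sum_pos (fun j _ => (h2 j).1) Finset.univ_nonempty
  have hS1le : S1 ≤ d * HB1 := by
    calc S1 ≤ ∑ _j : Fin d, HB1 := Finset.sum_le_sum (fun j _ => hub1 ⟨j, rfl⟩)
      _ = d * HB1 := by simp [Finset.sum_const, Finset.card_univ, nsmul_eq_mul]
  have hS2le : S2 ≤ d * HB2 := by
    calc S2 ≤ ∑ _j : Fin d, HB2 := Finset.sum_le_sum (fun j _ => hub2 ⟨j, rfl⟩)
      _ = d * HB2 := by simp [Finset.sum_const, Finset.card_univ, nsmul_eq_mul]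
  have hd0 : (0:ℝ) < d := by positivity
  have hsum : 1 < 1/S1 + 1/S2 := by
    have k1 : 1/(d * HB1) ≤ 1/S1 := one_div_le_one_div_of_le hS1pos hS1le
    have k2 : 1/(d * HB2) ≤ 1/S2 := one_div_le_one_div_of_le hS2pos hS2le
    have k3 : 1 < 1/(d*HB1) + 1/(d*HB2) := by
      rw [show 1/(d*HB1) + 1/(d*HB2) = (1/HB1 + 1/HB2)/d by field_simp]
      rw [lt_div_iff₀ hd0]
      linarith
    linarith
  -- choose the weights α, β
  set lo := max 0 (1 - 1/S2) with hlodef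
  set hi := min 1 (1/S1) with hhidef
  have hlohi : lo < hi := by
    apply max_lt
    · exact lt_min one_pos (by positivity)
    · apply lt_min (by nlinarith [one_div_pos.mpr hS2pos]) (by linarith)
  set α := (lo + hi)/2 with hαdef
  set β := 1 - α with hβdef
  have hloα : lo < α := by rw [hαdef]; linarith
  have hαhi : α < hi := by rw [hαdef]; linarith
  have hα0 : 0 < α := lt_of_le_of_lt (le_max_left _ _) hloα
  have hα1 : α < 1 := lt_of_lt_of_le hαhi (min_le_left _ _)
  have hβ0 : 0 < β := by rw [hβdef]; linarith
  have hαβ : α + β = 1 := by rw [hβdef]; ring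
  set p := α * S1 with hpdef
  set q := β * S2 with hqdef
  have hp0 : 0 ≤ p := by positivity
  have hq0 : 0 ≤ q := by positivity
  have hp1 : p < 1 := by
    have : α < 1/S1 := lt_of_lt_of_le hαhi (min_le_right _ _)
    rw [hpdef]; rw [lt_div_iff₀ hS1pos] at this; linarith
  have hq1 : q < 1 := by
    have h5 : 1 - 1/S2 ≤ lo := le_max_right _ _
    have : β < 1/S2 := by rw [hβdef]; linarith
    rw [hqdef]; rw [lt_div_iff₀ hS2pos] at this; linarith
  -- the constant
  set CC := ∏ j, (min (1 - H1 j) (1 - H2 j) / 4) ^ (-(1:ℝ)/2) with hCCdef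
  have hCC0 : 0 ≤ CC := by
    apply Finset.prod_nonneg
    intro j _
    apply Real.rpow_nonneg
    have : 0 < min (1 - H1 j) (1 - H2 j) := lt_min (by linarith [(h1 j).2]) (by linarith [(h2 j).2])
    positivity
  -- pointwise bound
  have key : ∀ t t' s s' : ℝ, 0 < t → 0 < t' → 0 < s → 0 < s' → t ≠ t' → s ≠ s' →
      ENNReal.ofReal (∏ j,
          ((t ^ (2 * H1 j) + s ^ (2 * H2 j)) * (t' ^ (2 * H1 j) + s' ^ (2 * H2 j)) -
              1/4 * (t ^ (2 * H1 j) + t' ^ (2 * H1 j) - |t - t'| ^ (2 * H1 j) +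
                      s ^ (2 * H2 j) + s' ^ (2 * H2 j) - |s - s'| ^ (2 * H2 j)) ^ 2) ^
            (-(1:ℝ)/2)) ≤
        ENNReal.ofReal CC * ENNReal.ofReal ((min t t' * |t - t'|) ^ (-p)) *
          ENNReal.ofReal ((min s s' * |s - s'|) ^ (-q)) := by
    intro t t' s s' ht ht' hs hs' htt hss
    have hm1 : 0 < min t t' * |t - t'| :=
      mul_pos (lt_min ht ht') (abs_pos.mpr (sub_ne_zero.mpr htt))
    have hm2 : 0 < min s s' * |s - s'| :=
      mul_pos (lt_min hs hs') (abs_pos.mpr (sub_ne_zero.mpr hss))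
    have hreal : (∏ j,
        ((t ^ (2 * H1 j) + s ^ (2 * H2 j)) * (t' ^ (2 * H1 j) + s' ^ (2 * H2 j)) -
            1/4 * (t ^ (2 * H1 j) + t' ^ (2 * H1 j) - |t - t'| ^ (2 * H1 j) +
                    s ^ (2 * H2 j) + s' ^ (2 * H2 j) - |s - s'| ^ (2 * H2 j)) ^ 2) ^
          (-(1:ℝ)/2)) ≤
        CC * ((min t t' * |t - t'|) ^ (-p) * (min s s' * |s - s'|) ^ (-q)) := by
      have step : ∀ j : Fin d,
          ((t ^ (2 * H1 j) + s ^ (2 * H2 j)) * (t' ^ (2 * H1 j) + s' ^ (2 * H2 j)) -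
              1/4 * (t ^ (2 * H1 j) + t' ^ (2 * H1 j) - |t - t'| ^ (2 * H1 j) +
                      s ^ (2 * H2 j) + s' ^ (2 * H2 j) - |s - s'| ^ (2 * H2 j)) ^ 2) ^
            (-(1:ℝ)/2) ≤
          (min (1 - H1 j) (1 - H2 j) / 4) ^ (-(1:ℝ)/2) *
            (min t t' * |t - t'|) ^ (-(α * H1 j)) * (min s s' * |s - s'|) ^ (-(β * H2 j)) :=
        fun j => (factor_bound (h1 j) (h2 j) hα0 hβ0 hαβ ht ht' hs hs' htt hss).2
      have hnn : ∀ j : Fin d, (0:ℝ) ≤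
          ((t ^ (2 * H1 j) + s ^ (2 * H2 j)) * (t' ^ (2 * H1 j) + s' ^ (2 * H2 j)) -
              1/4 * (t ^ (2 * H1 j) + t' ^ (2 * H1 j) - |t - t'| ^ (2 * H1 j) +
                      s ^ (2 * H2 j) + s' ^ (2 * H2 j) - |s - s'| ^ (2 * H2 j)) ^ 2) ^
            (-(1:ℝ)/2) := fun j => Real.rpow_nonneg
        (factor_bound (h1 j) (h2 j) hα0 hβ0 hαβ ht ht' hs hs' htt hss).1.le _
      calc (∏ j, _) ≤ ∏ j, ((min (1 - H1 j) (1 - H2 j) / 4) ^ (-(1:ℝ)/2) *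
            (min t t' * |t - t'|) ^ (-(α * H1 j)) * (min s s' * |s - s'|) ^ (-(β * H2 j))) :=
          Finset.prod_le_prod (fun j _ => hnn j) (fun j _ => step j)
        _ = CC * ((min t t' * |t - t'|) ^ (-p) * (min s s' * |s - s'|) ^ (-q)) := by
          rw [Finset.prod_mul_distrib, Finset.prod_mul_distrib]
          rw [← Real.rpow_sum_of_pos hm1, ← Real.rpow_sum_of_pos hm2]
          rw [show ∑ j, -(α * H1 j) = -p by
            rw [hpdef, hS1def, Finset.mul_sum, ← Finset.sum_neg_distrib]]
          rw [show ∑ j, -(β * H2 j) = -q by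
            rw [hqdef, hS2def, Finset.mul_sum, ← Finset.sum_neg_distrib]]
          rw [hCCdef, mul_assoc]
    calc ENNReal.ofReal (∏ j, _) ≤
        ENNReal.ofReal (CC * ((min t t' * |t - t'|) ^ (-p) * (min s s' * |s - s'|) ^ (-q))) :=
          ENNReal.ofReal_le_ofReal hreal
      _ = ENNReal.ofReal CC * ENNReal.ofReal ((min t t' * |t - t'|) ^ (-p)) *
          ENNReal.ofReal ((min s s' * |s - s'|) ^ (-q)) := by
          rw [ENNReal.ofReal_mul hCC0, ENNReal.ofReal_mul (Real.rpow_nonneg hm1.le _), mul_assoc]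
  have key' : ∀ t t' s s' : ℝ, 0 < t → 0 < t' → 0 < s → 0 < s' → t ≠ t' → s ≠ s' →
      intg d H1 H2 t t' s s' ≤
        ENNReal.ofReal CC * ENNReal.ofReal ((min t t' * |t - t'|) ^ (-p)) *
          ENNReal.ofReal ((min s s' * |s - s'|) ^ (-q)) := by
    intro t t' s s' ht ht' hs hs' htt hss
    exact key t t' s s' ht ht' hs hs' htt hss
  clear key
  have aene : ∀ (c : ℝ) (S : Set ℝ), ∀ᵐ x ∂(volume.restrict S), x ≠ c := by
    intro c S
    apply ae_restrict_of_ae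
    have h0 : volume ({c} : Set ℝ) = 0 := Real.volume_singleton
    filter_upwards [measure_eq_zero_iff_ae_notMem.mp h0] with x hx
    simpa using hx
  set M2 := ∫⁻ s in Icc (0:ℝ) T, ∫⁻ s' in Icc (0:ℝ) T,
      ENNReal.ofReal ((min s s' * |s - s'|) ^ (-q)) with hM2def
  set M1 := ∫⁻ t in Icc (0:ℝ) T, ∫⁻ t' in Icc (0:ℝ) T,
      ENNReal.ofReal ((min t t' * |t - t'|) ^ (-p)) with hM1def
  have hM2 : M2 < ⊤ := Jfin hT hq0 hq1
  have hM1 : M1 < ⊤ := Jfin hT hp0 hp1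
  have lvl2 : ∀ t t' : ℝ, 0 < t → 0 < t' → t ≠ t' →
      (∫⁻ s in Icc (0:ℝ) T, ∫⁻ s' in Icc (0:ℝ) T, intg d H1 H2 t t' s s') ≤
        ENNReal.ofReal CC * ENNReal.ofReal ((min t t' * |t - t'|) ^ (-p)) * M2 := by
    intro t t' ht ht' htt
    have hKne : ENNReal.ofReal CC * ENNReal.ofReal ((min t t' * |t - t'|) ^ (-p)) ≠ ⊤ :=
      ENNReal.mul_ne_top ENNReal.ofReal_ne_top ENNReal.ofReal_ne_top
    calc (∫⁻ s in Icc (0:ℝ) T, ∫⁻ s' in Icc (0:ℝ) T, intg d H1 H2 t t' s s')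
        ≤ ∫⁻ s in Icc (0:ℝ) T,
            (ENNReal.ofReal CC * ENNReal.ofReal ((min t t' * |t - t'|) ^ (-p)) *
              ∫⁻ s' in Icc (0:ℝ) T, ENNReal.ofReal ((min s s' * |s - s'|) ^ (-q))) := by
          apply lintegral_mono_ae
          filter_upwards [ae_restrict_mem measurableSet_Icc, aene 0 _] with s hsI hs0
          have hs : 0 < s := lt_of_le_of_ne hsI.1 (Ne.symm hs0)
          calc (∫⁻ s' in Icc (0:ℝ) T, intg d H1 H2 t t' s s')
              ≤ ∫⁻ s' in Icc (0:ℝ) T,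
                  (ENNReal.ofReal CC * ENNReal.ofReal ((min t t' * |t - t'|) ^ (-p)) *
                    ENNReal.ofReal ((min s s' * |s - s'|) ^ (-q))) := by
                apply lintegral_mono_ae
                filter_upwards [ae_restrict_mem measurableSet_Icc, aene 0 _, aene s _]
                  with s' hs'I hs'0 hs's
                have hs' : 0 < s' := lt_of_le_of_ne hs'I.1 (Ne.symm hs'0)
                exact key' t t' s s' ht ht' hs hs' htt (Ne.symm hs's)
            _ = ENNReal.ofReal CC * ENNReal.ofReal ((min t t' * |t - t'|) ^ (-p)) *
                  ∫⁻ s' in Icc (0:ℝ) T, ENNReal.ofReal ((min s s' * |s - s'|) ^ (-q)) :=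
              lintegral_const_mul' _ _ hKne
      _ = ENNReal.ofReal CC * ENNReal.ofReal ((min t t' * |t - t'|) ^ (-p)) * M2 := by
          rw [lintegral_const_mul' _ _ hKne, hM2def]
  have lvl1 : ∀ t : ℝ, 0 < t →
      (∫⁻ t' in Icc (0:ℝ) T, ∫⁻ s in Icc (0:ℝ) T, ∫⁻ s' in Icc (0:ℝ) T,
          intg d H1 H2 t t' s s') ≤
        ENNReal.ofReal CC * M2 *
          ∫⁻ t' in Icc (0:ℝ) T, ENNReal.ofReal ((min t t' * |t - t'|) ^ (-p)) := by
    intro t ht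
    have hKne : ENNReal.ofReal CC * M2 ≠ ⊤ :=
      ENNReal.mul_ne_top ENNReal.ofReal_ne_top hM2.ne
    calc (∫⁻ t' in Icc (0:ℝ) T, ∫⁻ s in Icc (0:ℝ) T, ∫⁻ s' in Icc (0:ℝ) T,
          intg d H1 H2 t t' s s')
        ≤ ∫⁻ t' in Icc (0:ℝ) T,
            (ENNReal.ofReal CC * M2 * ENNReal.ofReal ((min t t' * |t - t'|) ^ (-p))) := by
          apply lintegral_mono_ae
          filter_upwards [ae_restrict_mem measurableSet_Icc, aene 0 _, aene t _]
            with t' ht'I ht'0 ht't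
          have ht' : 0 < t' := lt_of_le_of_ne ht'I.1 (Ne.symm ht'0)
          refine (lvl2 t t' ht ht' (Ne.symm ht't)).trans (le_of_eq ?_)
          ring
      _ = ENNReal.ofReal CC * M2 *
            ∫⁻ t' in Icc (0:ℝ) T, ENNReal.ofReal ((min t t' * |t - t'|) ^ (-p)) :=
        lintegral_const_mul' _ _ hKne
  have hKne : ENNReal.ofReal CC * M2 ≠ ⊤ :=
    ENNReal.mul_ne_top ENNReal.ofReal_ne_top hM2.ne
  calc (∫⁻ t in Icc (0:ℝ) T, ∫⁻ t' in Icc (0:ℝ) T, ∫⁻ s in Icc (0:ℝ) T,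
        ∫⁻ s' in Icc (0:ℝ) T, intg d H1 H2 t t' s s')
      ≤ ∫⁻ t in Icc (0:ℝ) T, (ENNReal.ofReal CC * M2 *
          ∫⁻ t' in Icc (0:ℝ) T, ENNReal.ofReal ((min t t' * |t - t'|) ^ (-p))) := by
        apply lintegral_mono_ae
        filter_upwards [ae_restrict_mem measurableSet_Icc, aene 0 _] with t htI ht0
        exact lvl1 t (lt_of_le_of_ne htI.1 (Ne.symm ht0))
    _ = ENNReal.ofReal CC * M2 * M1 := by
        rw [lintegral_const_mul' _ _ hKne, hM1def]
    _ < ⊤ := ENNReal.mul_lt_top (ENNReal.mul_lt_top ENNReal.ofReal_lt_top hM2) hM1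
end
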